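/- arXiv:1903.01208 — 10 statements merged into one kernel-verified Lean document; each statement's English description precedes it below -/
import Mathlib

section
/- Let A ∈ ℝ^{m×n} be a matrix with unit ℓ²-norm columns a₁,…,aₙ, partitioned into N ≥ 2 blocks A = [A₁,…,A_N] via a block-assignment map π : {1,…,n} → {1,…,N}. Suppose μ > 0 is such that |⟨a_j, a_k⟩| ≤ μ for all j ≠ k, and there are constants α_i ∈ [0,1] such that |⟨a_j, a_k⟩| ≤ α_i μ whenever j ≠ k and π(j) = π(k) = i; set α_max = max_{1≤i≤N} α_i. If x ∈ ℝⁿ satisfies Ax = b and ‖x‖₀ < N(1 + α_max μ)/(2(N − 1 + α_max)μ), then x is the unique sparsest solution: every y ∈ ℝⁿ with Ay = b and ‖y‖₀ ≤ ‖x‖₀ satisfies y = x. -/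
/-- The number of nonzero entries of a vector (`‖x‖₀`). -/
noncomputable def l0 {n : ℕ} (x : Fin n → ℝ) : ℕ :=
  (Finset.univ.filter fun j => x j ≠ 0).card

open Finset

lemma l0_sub_le {n : ℕ} (x y : Fin n → ℝ) : l0 (x - y) ≤ l0 x + l0 y := by
  classical
  unfold l0
  refine le_trans (Finset.card_le_card ?_) (Finset.card_union_le _ _)
  intro j hj
  simp only [mem_filter, mem_union, mem_univ, true_and, Pi.sub_apply] at *
  by_contra h
  push_neg at h
  simp [h.1, h.2] at hj

lemma spark_bound {m n N : ℕ} (hN : 2 ≤ N)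
    (A : Matrix (Fin m) (Fin n) ℝ) (π : Fin n → Fin N)
    (hunit : ∀ j, ∑ i, A i j * A i j = 1)
    (μ : ℝ) (hμ : 0 < μ)
    (hcoh : ∀ j k, j ≠ k → |∑ i, A i j * A i k| ≤ μ)
    (αmax : ℝ) (h0 : 0 ≤ αmax) (h1 : αmax ≤ 1)
    (hblock : ∀ j k, j ≠ k → π j = π k → |∑ i, A i j * A i k| ≤ αmax * μ)
    (z : Fin n → ℝ) (hz : A.mulVec z = 0) (hz0 : z ≠ 0) :
    (N : ℝ) * (1 + αmax * μ) ≤ ((N : ℝ) - 1 + αmax) * μ * (l0 z) := by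
  classical
  set G : Fin n → Fin n → ℝ := fun j k => ∑ i, A i j * A i k with hG
  set w : Fin n → ℝ := fun j => |z j| with hw
  set Q : ℝ := ∑ j, z j ^ 2 with hQ
  set T : ℝ := ∑ j, w j with hT
  set s : Fin N → ℝ := fun i => ∑ j ∈ univ.filter (fun j => π j = i), w j with hs
  have hwnn : ∀ j, 0 ≤ w j := fun j => abs_nonneg _
  -- Gram identity
  have key : ∑ j, ∑ k, z j * z k * G j k = 0 := by
    have heq : ∑ j, ∑ k, z j * z k * G j k = ∑ i, (A.mulVec z i) * (A.mulVec z i) := by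
      simp only [Matrix.mulVec, dotProduct, hG, Finset.mul_sum, Finset.sum_mul]
      rw [Finset.sum_comm (s := (univ : Finset (Fin n))) (t := (univ : Finset (Fin n)))]
      rw [Finset.sum_comm (s := (univ : Finset (Fin m))) (t := (univ : Finset (Fin n)))]
      refine Finset.sum_congr rfl fun k _ => ?_
      rw [Finset.sum_comm]
      exact Finset.sum_congr rfl fun i _ => Finset.sum_congr rfl fun j _ => by ring
    rw [heq, hz]
    simp
  -- split diagonal
  have split : ∑ j, ∑ k, z j * z k * G j k
      = Q + ∑ j, ∑ k ∈ univ.erase j, z j * z k * G j k := by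
    rw [hQ, ← Finset.sum_add_distrib]
    refine Finset.sum_congr rfl fun j _ => ?_
    rw [← Finset.add_sum_erase univ _ (mem_univ j)]
    have hdd : z j * z j * G j j = z j ^ 2 := by
      simp only [hG, hunit j]; ring
    rw [hdd]
  have hQeq : Q = -∑ j, ∑ k ∈ univ.erase j, z j * z k * G j k := by
    rw [split] at key; linarith
  -- bound off-diagonal terms
  have hbound : Q ≤ ∑ j, ∑ k ∈ univ.erase j,
      w j * w k * (if π j = π k then αmax * μ else μ) := by
    rw [hQeq]
    have hneg : -∑ j, ∑ k ∈ univ.erase j, z j * z k * G j k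
        = ∑ j, ∑ k ∈ univ.erase j, -(z j * z k * G j k) := by
      simp [Finset.sum_neg_distrib]
    rw [hneg]
    refine Finset.sum_le_sum fun j _ => Finset.sum_le_sum fun k hk => ?_
    have hjk : k ≠ j := Finset.ne_of_mem_erase hk
    have h2' : |z j * z k * G j k| = w j * w k * |G j k| := by
      rw [abs_mul, abs_mul]
    have h3' : |G j k| ≤ (if π j = π k then αmax * μ else μ) := by
      split_ifs with h
      · exact hblock j k (Ne.symm hjk) h
      · exact hcoh j k (Ne.symm hjk)
    calc -(z j * z k * G j k) ≤ |z j * z k * G j k| := neg_le_abs _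
      _ = w j * w k * |G j k| := h2'
      _ ≤ w j * w k * (if π j = π k then αmax * μ else μ) :=
          mul_le_mul_of_nonneg_left h3' (mul_nonneg (hwnn j) (hwnn k))
  -- compute the bounding double sum
  set D : Fin n → Fin n → ℝ :=
    fun j k => w j * w k * (if π j = π k then αmax * μ else μ) with hD
  have haveA : ∑ j, ∑ k, w j * w k = T ^ 2 := by
    rw [hT, sq, Finset.sum_mul_sum]
  have haveB : ∑ j, ∑ k, (if π j = π k then w j * w k else 0) = ∑ i, s i ^ 2 := by
    have step1 : ∀ j : Fin n, ∑ k, (if π j = π k then w j * w k else 0)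
        = w j * s (π j) := by
      intro j
      have : ∀ k : Fin n, (if π j = π k then w j * w k else 0)
          = w j * (if π k = π j then w k else 0) := by
        intro k
        by_cases h : π j = π k
        · simp [h]
        · have h' : ¬ (π k = π j) := fun hh => h hh.symm
          simp [h, h']
      rw [Finset.sum_congr rfl fun k _ => this k, ← Finset.mul_sum]
      congr 1
      have hsf : s (π j) = ∑ k, if π k = π j then w k else 0 := Finset.sum_filter _ _
      rw [hsf]
    rw [Finset.sum_congr rfl fun j _ => step1 j]
    rw [← Finset.sum_fiberwise univ π (fun j => w j * s (π j))]
    refine Finset.sum_congr rfl fun i _ => ?_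
    have : ∑ j ∈ univ.filter (fun j => π j = i), w j * s (π j)
        = ∑ j ∈ univ.filter (fun j => π j = i), w j * s i := by
      refine Finset.sum_congr rfl fun j hj => ?_
      rw [(Finset.mem_filter.1 hj).2]
    rw [this, ← Finset.sum_mul, hs, sq]
  have hfull : ∑ j, ∑ k, D j k = μ * T ^ 2 - (1 - αmax) * μ * ∑ i, s i ^ 2 := by
    have hDexp : ∀ j k, D j k = μ * (w j * w k)
        - (1 - αmax) * μ * (if π j = π k then w j * w k else 0) := by
      intro j k
      by_cases h : π j = π k <;> simp [hD, h] <;> ring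
    calc ∑ j, ∑ k, D j k
        = ∑ j, ∑ k, (μ * (w j * w k)
            - (1 - αmax) * μ * (if π j = π k then w j * w k else 0)) :=
          Finset.sum_congr rfl fun j _ => Finset.sum_congr rfl fun k _ => hDexp j k
      _ = μ * (∑ j, ∑ k, w j * w k)
            - (1 - αmax) * μ * (∑ j, ∑ k, if π j = π k then w j * w k else 0) := by
          rw [Finset.mul_sum, Finset.mul_sum, ← Finset.sum_sub_distrib]
          refine Finset.sum_congr rfl fun j _ => ?_
          rw [Finset.mul_sum, Finset.mul_sum, ← Finset.sum_sub_distrib]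
      _ = μ * T ^ 2 - (1 - αmax) * μ * ∑ i, s i ^ 2 := by rw [haveA, haveB]
  have hdiag : ∑ j, D j j = αmax * μ * Q := by
    rw [hQ, Finset.mul_sum]
    refine Finset.sum_congr rfl fun j _ => ?_
    simp only [hD, if_pos rfl, if_true, eq_self_iff_true, hw]
    rw [abs_mul_abs_self]
    ring
  have hstar : Q ≤ μ * T ^ 2 - (1 - αmax) * μ * (∑ i, s i ^ 2) - αmax * μ * Q := by
    have herase : ∑ j, ∑ k ∈ univ.erase j, D j k
        = μ * T ^ 2 - (1 - αmax) * μ * (∑ i, s i ^ 2) - αmax * μ * Q := by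
      have hj : ∀ j : Fin n, ∑ k ∈ univ.erase j, D j k = (∑ k, D j k) - D j j := by
        intro j
        rw [← Finset.add_sum_erase univ (D j) (mem_univ j)]
        ring
      rw [Finset.sum_congr rfl fun j _ => hj j, Finset.sum_sub_distrib, hfull, hdiag]
    rw [← herase]
    exact hbound
  -- Cauchy-Schwarz estimates
  have hTs : T = ∑ i, s i := (Finset.sum_fiberwise univ π w).symm
  have hTN : T ^ 2 ≤ (N : ℝ) * ∑ i, s i ^ 2 := by
    have := sq_sum_le_card_mul_sum_sq (s := (univ : Finset (Fin N))) (f := s)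
    rw [hTs]
    simpa using this
  have hTQ : T ^ 2 ≤ (l0 z : ℝ) * Q := by
    set S := univ.filter (fun j => z j ≠ 0) with hS
    have hTS : T = ∑ j ∈ S, w j := by
      rw [hT]
      symm
      apply Finset.sum_subset (Finset.subset_univ S)
      intro j _ hj
      simp only [hS, mem_filter, mem_univ, true_and, not_not] at hj
      simp [hw, hj]
    have hl0 : (l0 z : ℝ) = (S.card : ℝ) := rfl
    have h2 : ∑ j ∈ S, w j ^ 2 ≤ Q := by
      calc ∑ j ∈ S, w j ^ 2 ≤ ∑ j, w j ^ 2 :=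
            Finset.sum_le_sum_of_subset_of_nonneg (Finset.subset_univ S)
              (fun j _ _ => sq_nonneg _)
        _ = Q := by rw [hQ]; exact Finset.sum_congr rfl fun j _ => sq_abs (z j)
    calc T ^ 2 = (∑ j ∈ S, w j) ^ 2 := by rw [hTS]
      _ ≤ S.card * ∑ j ∈ S, w j ^ 2 := sq_sum_le_card_mul_sum_sq
      _ ≤ (l0 z : ℝ) * Q := by
          rw [hl0]
          exact mul_le_mul_of_nonneg_left h2 (Nat.cast_nonneg _)
  have hQpos : 0 < Q := by
    obtain ⟨j, hj⟩ := Function.ne_iff.mp hz0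
    rw [hQ]
    exact Finset.sum_pos' (fun k _ => sq_nonneg _) ⟨j, mem_univ j, lt_of_le_of_ne (sq_nonneg _) (fun h => hj ((pow_eq_zero_iff (by norm_num)).1 h.symm))⟩
  -- combine
  have hNR : (2 : ℝ) ≤ (N : ℝ) := by exact_mod_cast hN
  have c1 : 0 ≤ (1 - αmax) * μ := mul_nonneg (by linarith) hμ.le
  have c2 : 0 ≤ ((N : ℝ) - 1 + αmax) * μ := mul_nonneg (by linarith) hμ.le
  have e1 : (1 - αmax) * μ * T ^ 2 ≤ (1 - αmax) * μ * ((N : ℝ) * ∑ i, s i ^ 2) :=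
    mul_le_mul_of_nonneg_left hTN c1
  have estar : (N : ℝ) * Q ≤ (N : ℝ) * (μ * T ^ 2 - (1 - αmax) * μ * (∑ i, s i ^ 2) - αmax * μ * Q) :=
    mul_le_mul_of_nonneg_left hstar (by linarith)
  have e2 : (N : ℝ) * (1 + αmax * μ) * Q ≤ ((N : ℝ) - 1 + αmax) * μ * T ^ 2 := by
    nlinarith [estar, e1]
  have e3 : ((N : ℝ) - 1 + αmax) * μ * T ^ 2 ≤ ((N : ℝ) - 1 + αmax) * μ * ((l0 z : ℝ) * Q) :=
    mul_le_mul_of_nonneg_left hTQ c2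
  have e4 : (N : ℝ) * (1 + αmax * μ) * Q ≤ (((N : ℝ) - 1 + αmax) * μ * (l0 z : ℝ)) * Q := by
    nlinarith [e2, e3]
  exact le_of_mul_le_mul_right e4 hQpos

/-- **Uniqueness of piecewise sparse recovery.**
If `A` has unit-norm columns partitioned into `N ≥ 2` blocks by `π`, overall coherence
bounded by `μ > 0`, within-block coherence of block `i` bounded by `α i * μ` with
`α i ∈ [0,1]`, `αmax = max_i α i`, and `x` solves `A x = b` with
`‖x‖₀ < N (1 + αmax μ) / (2 (N - 1 + αmax) μ)`, then `x` is the unique sparsest solution. -/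
theorem piecewise_uniqueness {m n N : ℕ} (hN : 2 ≤ N)
    (A : Matrix (Fin m) (Fin n) ℝ) (π : Fin n → Fin N)
    (hunit : ∀ j, ∑ i, A i j * A i j = 1)
    (μ : ℝ) (hμ : 0 < μ)
    (hcoh : ∀ j k, j ≠ k → |∑ i, A i j * A i k| ≤ μ)
    (α : Fin N → ℝ) (hα0 : ∀ i, 0 ≤ α i) (hα1 : ∀ i, α i ≤ 1)
    (hblock : ∀ j k, j ≠ k → π j = π k → |∑ i, A i j * A i k| ≤ α (π j) * μ)
    (αmax : ℝ) (hαmax : IsGreatest (Set.range α) αmax)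
    (x : Fin n → ℝ) (b : Fin m → ℝ) (hx : A.mulVec x = b)
    (hsparse : (l0 x : ℝ) < (N : ℝ) * (1 + αmax * μ) / (2 * ((N : ℝ) - 1 + αmax) * μ)) :
    ∀ y : Fin n → ℝ, A.mulVec y = b → l0 y ≤ l0 x → y = x := by
  intro y hy hle
  by_contra hne
  have hz0 : y - x ≠ 0 := sub_ne_zero.2 hne
  have hz : A.mulVec (y - x) = 0 := by
    rw [Matrix.mulVec_sub, hy, hx, sub_self]
  obtain ⟨i0, hi0⟩ := hαmax.1
  have h0 : 0 ≤ αmax := hi0 ▸ hα0 i0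
  have h1 : αmax ≤ 1 := hi0 ▸ hα1 i0
  have hblock' : ∀ j k, j ≠ k → π j = π k → |∑ i, A i j * A i k| ≤ αmax * μ := by
    intro j k hjk hp
    exact (hblock j k hjk hp).trans
      (mul_le_mul_of_nonneg_right (hαmax.2 ⟨π j, rfl⟩) hμ.le)
  have key := spark_bound hN A π hunit μ hμ hcoh αmax h0 h1 hblock' (y - x) hz hz0
  have hcard : (l0 (y - x) : ℝ) ≤ 2 * (l0 x : ℝ) := by
    have h := l0_sub_le y x
    have : l0 (y - x) ≤ 2 * l0 x := by omega
    exact_mod_cast this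
  have hNR : (2 : ℝ) ≤ (N : ℝ) := by exact_mod_cast hN
  have hden : 0 < 2 * ((N : ℝ) - 1 + αmax) * μ := by
    have : 0 < (N : ℝ) - 1 + αmax := by linarith
    positivity
  have hsp : (l0 x : ℝ) * (2 * ((N : ℝ) - 1 + αmax) * μ) < (N : ℝ) * (1 + αmax * μ) :=
    (lt_div_iff₀ hden).1 hsparse
  have c2 : 0 ≤ ((N : ℝ) - 1 + αmax) * μ := mul_nonneg (by linarith) hμ.le
  have hstep : ((N : ℝ) - 1 + αmax) * μ * (l0 (y - x) : ℝ)
      ≤ ((N : ℝ) - 1 + αmax) * μ * (2 * (l0 x : ℝ)) :=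
    mul_le_mul_of_nonneg_left hcard c2
  nlinarith [key, hstep, hsp]
end

section
/- Let A ∈ ℝ^{m×n} be a matrix with unit ℓ²-norm columns a₁,…,aₙ, partitioned into N blocks via a block-assignment map π : {1,…,n} → {1,…,N}. Suppose μ > 0 satisfies |⟨a_j, a_k⟩| ≤ μ for all j ≠ k, and α_max ∈ [0,1] satisfies |⟨a_j, a_k⟩| ≤ α_max μ whenever j ≠ k lie in the same block. Let z ∈ ℝⁿ be a nonzero vector with Az = 0, and for each i let s_i denote the number of nonzero entries of z whose index lies in block i. If (s_i − 1)·α_max·μ < 1 for every i, then Σ_{i=1}^{N} s_i μ / (1 + α_max μ + (1 − α_max) s_i μ) ≥ 1. -/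
/-- **Key inequality on blockwise supports of kernel vectors.**
If `A` has unit-norm columns partitioned into `N` blocks by `π`, overall coherence bounded
by `μ > 0`, within-block coherence bounded by `αmax * μ` with `αmax ∈ [0,1]`, and `z ≠ 0`
satisfies `A z = 0` with `s i` nonzero entries in block `i`, and `(s i - 1) αmax μ < 1`
for every `i`, then `∑ i, s i μ / (1 + αmax μ + (1 - αmax) s i μ) ≥ 1`. -/
theorem kernel_blockwise_inequality {m n N : ℕ}
    (A : Matrix (Fin m) (Fin n) ℝ) (π : Fin n → Fin N)
    (hunit : ∀ j, ∑ i, A i j * A i j = 1)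
    (μ : ℝ) (hμ : 0 < μ)
    (hcoh : ∀ j k, j ≠ k → |∑ i, A i j * A i k| ≤ μ)
    (αmax : ℝ) (hα0 : 0 ≤ αmax) (hα1 : αmax ≤ 1)
    (hblock : ∀ j k, j ≠ k → π j = π k → |∑ i, A i j * A i k| ≤ αmax * μ)
    (z : Fin n → ℝ) (hz : z ≠ 0) (hker : A.mulVec z = 0)
    (s : Fin N → ℕ)
    (hs : ∀ i, s i = (Finset.univ.filter fun j => π j = i ∧ z j ≠ 0).card)
    (hsmall : ∀ i, ((s i : ℝ) - 1) * αmax * μ < 1) :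
    1 ≤ ∑ i, (s i : ℝ) * μ / (1 + αmax * μ + (1 - αmax) * (s i : ℝ) * μ) := by
  classical
  set g : Fin n → Fin n → ℝ := fun j k => ∑ i, A i j * A i k with hg
  set S : ℝ := ∑ k, |z k| with hSdef
  have habs : ∀ k, 0 ≤ |z k| := fun k => abs_nonneg _
  have hS0 : 0 < S := by
    obtain ⟨j, hj⟩ : ∃ j, z j ≠ 0 := Function.ne_iff.mp hz
    have h1 : 0 < |z j| := abs_pos.mpr hj
    have h2 : |z j| ≤ S :=
      Finset.single_le_sum (fun k _ => habs k) (Finset.mem_univ j)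
    linarith
  set Sb : Fin N → ℝ := fun i => ∑ k ∈ Finset.univ.filter (fun k => π k = i), |z k|
    with hSb
  have hSb0 : ∀ i, 0 ≤ Sb i := fun i => Finset.sum_nonneg fun k _ => habs k
  have hSbsum : ∑ i, Sb i = S := by
    rw [hSdef, hSb]
    exact Finset.sum_fiberwise _ _ _
  have hSbS : ∀ i, Sb i ≤ S := by
    intro i
    rw [hSdef, hSb]
    exact Finset.sum_le_sum_of_subset_of_nonneg (Finset.filter_subset _ _)
      (fun k _ _ => habs k)
  -- kernel identity: z j = -∑_{k ≠ j} g j k * z k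
  have hker' : ∀ j, z j = -∑ k ∈ Finset.univ.erase j, g j k * z k := by
    intro j
    have h0 : ∑ k, g j k * z k = 0 := by
      have : ∑ k, g j k * z k = ∑ r, A r j * ∑ k, A r k * z k := by
        simp only [hg, Finset.sum_mul, Finset.mul_sum, mul_assoc]
        exact Finset.sum_comm
      rw [this]
      have : ∀ r, A.mulVec z r = 0 := fun r => congrFun hker r
      simp only [Matrix.mulVec, dotProduct] at this
      simp [this]
    have hsplit : ∑ k, g j k * z k = g j j * z j + ∑ k ∈ Finset.univ.erase j, g j k * z k :=
      (Finset.add_sum_erase _ _ (Finset.mem_univ j)).symm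
    have hgjj : g j j = 1 := hunit j
    rw [hsplit, hgjj, one_mul] at h0
    linarith
  -- pointwise bound
  have hpt : ∀ j, (1 + αmax * μ) * |z j| ≤
      αmax * μ * Sb (π j) + μ * (S - Sb (π j)) := by
    intro j
    set c : Fin n → ℝ := fun k => if π k = π j then αmax * μ else μ with hc
    have h1 : |z j| ≤ ∑ k ∈ Finset.univ.erase j, |g j k| * |z k| := by
      rw [hker' j]
      calc |-∑ k ∈ Finset.univ.erase j, g j k * z k|
          = |∑ k ∈ Finset.univ.erase j, g j k * z k| := abs_neg _
        _ ≤ ∑ k ∈ Finset.univ.erase j, |g j k * z k| := Finset.abs_sum_le_sum_abs _ _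
        _ = ∑ k ∈ Finset.univ.erase j, |g j k| * |z k| := by simp [abs_mul]
    have h2 : ∑ k ∈ Finset.univ.erase j, |g j k| * |z k| ≤
        ∑ k ∈ Finset.univ.erase j, c k * |z k| := by
      apply Finset.sum_le_sum
      intro k hk
      have hkj : k ≠ j := Finset.ne_of_mem_erase hk
      apply mul_le_mul_of_nonneg_right _ (habs k)
      by_cases hb : π k = π j
      · simp only [hc, if_pos hb]
        have : |∑ i, A i k * A i j| ≤ αmax * μ := hblock k j hkj hb
        calc |g j k| = |∑ i, A i k * A i j| := by
              simp [hg, mul_comm]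
          _ ≤ αmax * μ := this
      · simp only [hc, if_neg hb]
        calc |g j k| = |∑ i, A i k * A i j| := by simp [hg, mul_comm]
          _ ≤ μ := hcoh k j hkj
    have h3 : ∑ k ∈ Finset.univ.erase j, c k * |z k| =
        ∑ k, c k * |z k| - c j * |z j| := by
      rw [← Finset.add_sum_erase _ _ (Finset.mem_univ j)]; ring
    have h4 : ∑ k, c k * |z k| = αmax * μ * Sb (π j) + μ * (S - Sb (π j)) := by
      rw [← Finset.sum_filter_add_sum_filter_not Finset.univ (fun k => π k = π j)]
      have hA : ∑ k ∈ Finset.univ.filter (fun k => π k = π j), c k * |z k|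
          = αmax * μ * Sb (π j) := by
        rw [hSb, Finset.mul_sum]
        apply Finset.sum_congr rfl
        intro k hk
        simp only [Finset.mem_filter] at hk
        simp [hc, hk.2]
      have hB : ∑ k ∈ Finset.univ.filter (fun k => ¬ π k = π j), c k * |z k|
          = μ * (S - Sb (π j)) := by
        have : S - Sb (π j) = ∑ k ∈ Finset.univ.filter (fun k => ¬ π k = π j), |z k| := by
          rw [hSdef, hSb]
          rw [← Finset.sum_filter_add_sum_filter_not Finset.univ (fun k => π k = π j)
            (fun k => |z k|)]
          ring
        rw [this, Finset.mul_sum]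
        apply Finset.sum_congr rfl
        intro k hk
        simp only [Finset.mem_filter] at hk
        simp [hc, hk.2]
      rw [hA, hB]
    have h5 : c j = αmax * μ := by simp [hc]
    have h6 : |z j| ≤ αmax * μ * Sb (π j) + μ * (S - Sb (π j)) - αmax * μ * |z j| := by
      calc |z j| ≤ ∑ k ∈ Finset.univ.erase j, c k * |z k| := le_trans h1 h2
        _ = αmax * μ * Sb (π j) + μ * (S - Sb (π j)) - αmax * μ * |z j| := by
            rw [h3, h4, h5]
    linarith
  -- blockwise bound
  have hblk : ∀ i, (1 + αmax * μ + (1 - αmax) * (s i : ℝ) * μ) * Sb i ≤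
      (s i : ℝ) * μ * S := by
    intro i
    set T : Finset (Fin n) := Finset.univ.filter (fun j => π j = i ∧ z j ≠ 0) with hT
    have hTcard : (T.card : ℝ) = (s i : ℝ) := by rw [hs i]
    have hSbT : Sb i = ∑ j ∈ T, |z j| := by
      rw [hSb]
      symm
      apply Finset.sum_subset
      · intro j hj
        simp only [hT, Finset.mem_filter] at hj ⊢
        exact ⟨hj.1, hj.2.1⟩
      · intro j hj hj'
        simp only [hT, Finset.mem_filter] at hj hj'
        have : z j = 0 := by
          by_contra h
          exact hj' ⟨Finset.mem_univ j, hj.2, h⟩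
        simp [this]
    have hsum : (1 + αmax * μ) * Sb i ≤
        (s i : ℝ) * (αmax * μ * Sb i + μ * (S - Sb i)) := by
      calc (1 + αmax * μ) * Sb i = ∑ j ∈ T, (1 + αmax * μ) * |z j| := by
            rw [hSbT, Finset.mul_sum]
        _ ≤ ∑ j ∈ T, (αmax * μ * Sb i + μ * (S - Sb i)) := by
            apply Finset.sum_le_sum
            intro j hj
            simp only [hT, Finset.mem_filter] at hj
            have := hpt j
            rw [hj.2.1] at this
            exact this
        _ = (s i : ℝ) * (αmax * μ * Sb i + μ * (S - Sb i)) := by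
            rw [Finset.sum_const, nsmul_eq_mul, hTcard]
    nlinarith [hsum]
  -- conclude
  have hD : ∀ i, 0 < 1 + αmax * μ + (1 - αmax) * (s i : ℝ) * μ := by
    intro i
    have h1 : 0 ≤ αmax * μ := mul_nonneg hα0 hμ.le
    have h2 : 0 ≤ (1 - αmax) * (s i : ℝ) * μ := by
      apply mul_nonneg (mul_nonneg (by linarith) (Nat.cast_nonneg _)) hμ.le
    linarith
  have hfrac : ∀ i, Sb i / S ≤
      (s i : ℝ) * μ / (1 + αmax * μ + (1 - αmax) * (s i : ℝ) * μ) := by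
    intro i
    rw [div_le_div_iff₀ hS0 (hD i)]
    nlinarith [hblk i]
  calc (1 : ℝ) = ∑ i, Sb i / S := by
        rw [← Finset.sum_div, hSbsum, div_self hS0.ne']
    _ ≤ _ := Finset.sum_le_sum fun i _ => hfrac i
end

section
/- Let N ≥ 1 be an integer, μ > 0 and α ∈ [0,1] real numbers, and let s₁,…,s_N be nonnegative real numbers. If Σ_{i=1}^{N} s_i μ / (1 + αμ + (1 − α) s_i μ) ≥ 1, then Σ_{i=1}^{N} s_i ≥ N(1 + αμ)/((N − 1 + α)μ). -/
/-- **Optimization step of the spark bound.**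
If `N ≥ 1`, `μ > 0`, `α ∈ [0,1]`, the `s i` are nonnegative reals, and
`∑ i, s i μ / (1 + αμ + (1 - α) s i μ) ≥ 1`, then
`∑ i, s i ≥ N (1 + αμ) / ((N - 1 + α) μ)`. -/
theorem sum_lower_bound_of_constraint {N : ℕ} (hN : 1 ≤ N)
    (μ α : ℝ) (hμ : 0 < μ) (hα0 : 0 ≤ α) (hα1 : α ≤ 1)
    (s : Fin N → ℝ) (hs : ∀ i, 0 ≤ s i)
    (h : 1 ≤ ∑ i, s i * μ / (1 + α * μ + (1 - α) * s i * μ)) :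
    (N : ℝ) * (1 + α * μ) / (((N : ℝ) - 1 + α) * μ) ≤ ∑ i, s i := by
  have hN1 : (1 : ℝ) ≤ (N : ℝ) := by exact_mod_cast hN
  have hNpos : (0 : ℝ) < (N : ℝ) := by linarith
  have hA : (0 : ℝ) < 1 + α * μ := by nlinarith
  rcases eq_or_lt_of_le (show (0 : ℝ) ≤ (N : ℝ) - 1 + α by linarith) with hK0 | hKpos
  · rw [← hK0, zero_mul, div_zero]
    exact Finset.sum_nonneg fun i _ => hs i
  · set A : ℝ := 1 + α * μ with hAdef
    set K : ℝ := (N : ℝ) - 1 + α with hKdef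
    set s₀ : ℝ := A / (K * μ) with hs₀def
    set c : ℝ := μ * K ^ 2 / ((N : ℝ) ^ 2 * A) with hcdef
    have hc : 0 < c := by positivity
    have key : ∀ i, s i * μ / (1 + α * μ + (1 - α) * s i * μ)
        ≤ 1 / (N : ℝ) + c * (s i - s₀) := by
      intro i
      have hx := hs i
      have h1a : (0 : ℝ) ≤ 1 - α := by linarith
      have hD : (0 : ℝ) < 1 + α * μ + (1 - α) * s i * μ := by
        nlinarith [mul_nonneg (mul_nonneg h1a hx) hμ.le, mul_nonneg hα0 hμ.le]
      rw [div_le_iff₀ hD, ← sub_nonneg]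
      have hid : (1 / (N : ℝ) + c * (s i - s₀)) * (1 + α * μ + (1 - α) * s i * μ)
          - s i * μ
          = (1 - α) * (K * μ * s i - A) ^ 2 / ((N : ℝ) ^ 2 * A) := by
        rw [hcdef, hs₀def, hKdef, hAdef]
        have hK' : (N : ℝ) - 1 + α ≠ 0 := hKpos.ne'
        have hA' : 1 + α * μ ≠ 0 := hA.ne'
        field_simp
        ring
      rw [hid]
      have h1α : (0 : ℝ) ≤ 1 - α := by linarith
      positivity
    have hsum : (1 : ℝ) ≤ ∑ i, (1 / (N : ℝ) + c * (s i - s₀)) :=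
      le_trans h (Finset.sum_le_sum fun i _ => key i)
    have hexp : ∑ i, (1 / (N : ℝ) + c * (s i - s₀))
        = 1 + c * ((∑ i, s i) - (N : ℝ) * s₀) := by
      rw [Finset.sum_add_distrib, Finset.sum_const, Finset.card_fin, nsmul_eq_mul,
        ← Finset.mul_sum, Finset.sum_sub_distrib, Finset.sum_const, Finset.card_fin,
        nsmul_eq_mul, mul_one_div_cancel hNpos.ne']
    rw [hexp] at hsum
    have h0 : 0 ≤ c * ((∑ i, s i) - (N : ℝ) * s₀) := by linarith
    have h1 : 0 ≤ (∑ i, s i) - (N : ℝ) * s₀ := by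
      have := div_nonneg h0 hc.le
      rwa [mul_div_cancel_left₀ _ hc.ne'] at this
    have : (N : ℝ) * A / (K * μ) = (N : ℝ) * s₀ := by
      rw [hs₀def, mul_div_assoc]
    rw [hAdef, hKdef] at this ⊢
    rw [this]
    linarith
end

section
/- Let A ∈ ℝ^{m×n} be a union of N ≥ 2 orthonormal bases: A = [A₁,…,A_N] where the columns within each block A_i are pairwise orthogonal unit vectors. Suppose μ > 0 satisfies |⟨a_j, a_k⟩| ≤ μ for all columns a_j ≠ a_k of A. If x ∈ ℝⁿ satisfies Ax = b and ‖x‖₀ < N/(2(N − 1)μ), then x is the unique sparsest solution: every y with Ay = b and ‖y‖₀ ≤ ‖x‖₀ satisfies y = x. -/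
/-- **Uniqueness of sparse recovery in a union of `N` orthonormal bases.**
If `A` has unit-norm columns partitioned into `N ≥ 2` blocks by `π`, any two distinct
columns within the same block are orthogonal, the overall coherence is bounded by
`μ > 0`, and `x` solves `A x = b` with `‖x‖₀ < N / (2 (N - 1) μ)`, then `x` is the
unique sparsest solution. -/
theorem orthobases_uniqueness {m n N : ℕ} (hN : 2 ≤ N)
    (A : Matrix (Fin m) (Fin n) ℝ) (π : Fin n → Fin N)
    (hunit : ∀ j, ∑ i, A i j * A i j = 1)
    (horth : ∀ j k, j ≠ k → π j = π k → ∑ i, A i j * A i k = 0)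
    (μ : ℝ) (hμ : 0 < μ)
    (hcoh : ∀ j k, j ≠ k → |∑ i, A i j * A i k| ≤ μ)
    (x : Fin n → ℝ) (b : Fin m → ℝ) (hx : A.mulVec x = b)
    (hsparse : (l0 x : ℝ) < (N : ℝ) / (2 * ((N : ℝ) - 1) * μ)) :
    ∀ y : Fin n → ℝ, A.mulVec y = b → l0 y ≤ l0 x → y = x := by
  intro y hy hl
  by_contra hne
  set z : Fin n → ℝ := fun j => y j - x j with hzdef
  have hzne : ∃ j0, z j0 ≠ 0 := by
    by_contra h
    push_neg at h
    exact hne (funext fun j => by have := h j; simp [hzdef, sub_eq_zero] at this; exact this)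
  obtain ⟨j0, hj0⟩ := hzne
  -- A z = 0
  have hAz : ∀ i, ∑ k, A i k * z k = 0 := by
    intro i
    have hzv : z = y - x := rfl
    have h : A.mulVec z = 0 := by rw [hzv, Matrix.mulVec_sub, hx, hy, sub_self]
    have := congrFun h i
    simpa [Matrix.mulVec, dotProduct] using this
  -- column-correlation identity
  have h0 : ∀ j, ∑ k, (∑ i, A i j * A i k) * z k = 0 := by
    intro j
    have hc : ∑ k, (∑ i, A i j * A i k) * z k = ∑ i, A i j * (∑ k, A i k * z k) := by
      simp_rw [Finset.sum_mul, Finset.mul_sum]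
      rw [Finset.sum_comm]
      exact Finset.sum_congr rfl fun i _ => Finset.sum_congr rfl fun k _ => by ring
    rw [hc]
    simp [hAz]
  -- notation
  set S : ℝ := ∑ k, |z k| with hS
  set Sb : Fin N → ℝ := fun i => ∑ k ∈ Finset.univ.filter (fun k => π k = i), |z k| with hSb
  set u : Fin N → ℝ := fun i => ∑ k ∈ Finset.univ.filter (fun k => ¬ π k = i), |z k| with hu
  have hSbu : ∀ i, Sb i + u i = S := fun i =>
    Finset.sum_filter_add_sum_filter_not Finset.univ (fun k => π k = i) _
  have hu_nonneg : ∀ i, 0 ≤ u i := fun i =>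
    Finset.sum_nonneg fun k _ => abs_nonneg _
  have hSb_nonneg : ∀ i, 0 ≤ Sb i := fun i =>
    Finset.sum_nonneg fun k _ => abs_nonneg _
  -- key estimate : |z j| ≤ μ * u (π j)
  have hkey : ∀ j, |z j| ≤ μ * u (π j) := by
    intro j
    have h0j := h0 j
    rw [← Finset.add_sum_erase _ _ (Finset.mem_univ j), hunit j, one_mul] at h0j
    have hrest : ∑ k ∈ (Finset.univ.erase j).filter (fun k => ¬ π k = π j),
        (∑ i, A i j * A i k) * z k = ∑ k ∈ Finset.univ.erase j, (∑ i, A i j * A i k) * z k := by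
      apply Finset.sum_filter_of_ne
      intro k hk hne'
      intro hpk
      exact hne' (by rw [horth j k (fun h => (Finset.mem_erase.1 hk).1 h.symm) hpk.symm, zero_mul])
    have hzj : z j = -∑ k ∈ (Finset.univ.erase j).filter (fun k => ¬ π k = π j),
        (∑ i, A i j * A i k) * z k := by
      rw [hrest]; linarith
    have habs : |z j| ≤ ∑ k ∈ (Finset.univ.erase j).filter (fun k => ¬ π k = π j), μ * |z k| := by
      rw [hzj, abs_neg]
      refine (Finset.abs_sum_le_sum_abs _ _).trans (Finset.sum_le_sum fun k hk => ?_)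
      rw [abs_mul]
      exact mul_le_mul_of_nonneg_right
        (hcoh j k (fun h => (Finset.mem_erase.1 (Finset.mem_filter.1 hk).1).1 h.symm))
        (abs_nonneg _)
    refine habs.trans ?_
    rw [hu, ← Finset.mul_sum]
    apply mul_le_mul_of_nonneg_left ?_ hμ.le
    apply Finset.sum_le_sum_of_subset_of_nonneg
    · intro k hk
      simp only [Finset.mem_filter, Finset.mem_erase, Finset.mem_univ, true_and] at hk ⊢
      exact hk.2
    · intro k _ _; exact abs_nonneg _
  -- u i > 0 for all i
  have hupos : ∀ i, 0 < u i := by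
    intro i
    by_cases hi : i = π j0
    · subst hi
      have := (abs_pos.2 hj0).trans_le (hkey j0)
      nlinarith [hu_nonneg (π j0)]
    · have hj0mem : j0 ∈ Finset.univ.filter (fun k => ¬ π k = i) := by
        simp only [Finset.mem_filter, Finset.mem_univ, true_and]
        exact fun h => hi h.symm
      have : |z j0| ≤ u i :=
        Finset.single_le_sum (fun k _ => abs_nonneg (z k)) hj0mem
      exact (abs_pos.2 hj0).trans_le this
  have hSpos : 0 < S := by
    have := hupos (π j0)
    have h1 := hSbu (π j0)
    have hjm : |z j0| ≤ Sb (π j0) :=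
      Finset.single_le_sum (fun k _ => abs_nonneg (z k)) (by simp)
    nlinarith [abs_pos.2 hj0]
  -- block counts
  set c : Fin N → ℕ := fun i =>
    ((Finset.univ.filter fun k => z k ≠ 0).filter fun k => π k = i).card with hc
  have hcard : l0 z = ∑ i, c i :=
    Finset.card_eq_sum_card_fiberwise (fun k _ => Finset.mem_univ (π k))
  -- blockwise: Sb i ≤ c i * (μ * u i)
  have hblock : ∀ i, Sb i ≤ (c i : ℝ) * (μ * u i) := by
    intro i
    have he : Sb i = ∑ k ∈ (Finset.univ.filter fun k => π k = i).filter (fun k => z k ≠ 0),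
        |z k| :=
      (Finset.sum_filter_of_ne (fun k _ h => abs_ne_zero.1 h)).symm
    have hcc : ((Finset.univ.filter fun k => π k = i).filter (fun k => z k ≠ 0)).card = c i := by
      rw [hc, Finset.filter_comm]
    rw [he, ← hcc]
    refine le_trans (Finset.sum_le_card_nsmul _ _ (μ * u i) ?_) (by simp [nsmul_eq_mul])
    intro k hk
    have hπ : π k = i := (Finset.mem_filter.1 (Finset.mem_filter.1 hk).1).2
    exact hπ ▸ hkey k
  -- sum of fibers
  have hsumSb : ∑ i, Sb i = S :=
    Finset.sum_fiberwise_of_maps_to (fun k _ => Finset.mem_univ (π k)) _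
  have hsumu : ∑ i, u i = ((N : ℝ) - 1) * S := by
    have : ∑ i, u i = ∑ i : Fin N, (S - Sb i) :=
      Finset.sum_congr rfl fun i _ => by have := hSbu i; linarith
    rw [this, Finset.sum_sub_distrib, hsumSb]
    simp [mul_comm, sub_mul]
  have hN1 : (1 : ℝ) ≤ (N : ℝ) - 1 := by
    have : (2 : ℝ) ≤ (N : ℝ) := by exact_mod_cast hN
    linarith
  have hN1pos : (0 : ℝ) < (N : ℝ) - 1 := by linarith
  -- Cauchy–Schwarz (AM–HM)
  have hCS : ((N : ℝ)) ^ 2 ≤ (∑ i, u i) * (∑ i, (u i)⁻¹) := by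
    have := Finset.sum_sq_le_sum_mul_sum_of_sq_eq_mul Finset.univ
      (r := fun _ : Fin N => (1 : ℝ)) (f := u) (g := fun i => (u i)⁻¹)
      (fun i _ => (hupos i).le) (fun i _ => by positivity)
      (fun i _ => by rw [one_pow, mul_inv_cancel₀ (hupos i).ne'])
    simpa using this
  have hinvsum : (N : ℝ) ^ 2 / (((N : ℝ) - 1) * S) ≤ ∑ i, (u i)⁻¹ := by
    rw [div_le_iff₀ (by positivity)]
    calc (N : ℝ) ^ 2 ≤ (∑ i, u i) * (∑ i, (u i)⁻¹) := hCS
      _ = (∑ i, (u i)⁻¹) * (((N : ℝ) - 1) * S) := by rw [hsumu]; ring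
  -- combine
  have hterm : ∀ i, Sb i * (u i)⁻¹ ≤ μ * (c i : ℝ) := by
    intro i
    have h1 : Sb i * (u i)⁻¹ ≤ ((c i : ℝ) * (μ * u i)) * (u i)⁻¹ :=
      mul_le_mul_of_nonneg_right (hblock i) (by positivity)
    calc Sb i * (u i)⁻¹ ≤ ((c i : ℝ) * (μ * u i)) * (u i)⁻¹ := h1
      _ = μ * (c i : ℝ) := by
        rw [mul_assoc, mul_assoc, mul_inv_cancel₀ (hupos i).ne', mul_one, mul_comm]
  have hsumterm : ∑ i, Sb i * (u i)⁻¹ = S * (∑ i, (u i)⁻¹) - N := by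
    have heach : ∀ i : Fin N, Sb i * (u i)⁻¹ = S * (u i)⁻¹ - 1 := by
      intro i
      have h1 : Sb i = S - u i := by have := hSbu i; linarith
      rw [h1, sub_mul, mul_inv_cancel₀ (hupos i).ne']
    rw [Finset.sum_congr rfl fun i _ => heach i, Finset.sum_sub_distrib, ← Finset.mul_sum]
    simp
  have hmain : (N : ℝ) / ((N : ℝ) - 1) ≤ μ * (l0 z : ℝ) := by
    have h1 : S * (∑ i, (u i)⁻¹) - N ≤ μ * ∑ i, (c i : ℝ) := by
      rw [← hsumterm, Finset.mul_sum]
      exact Finset.sum_le_sum fun i _ => hterm i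
    have h2 : (N : ℝ) ^ 2 / ((N : ℝ) - 1) - N ≤ S * (∑ i, (u i)⁻¹) - N := by
      have : (N : ℝ) ^ 2 / ((N : ℝ) - 1) ≤ S * (∑ i, (u i)⁻¹) := by
        have := mul_le_mul_of_nonneg_left hinvsum hSpos.le
        calc (N : ℝ) ^ 2 / ((N : ℝ) - 1)
            = S * ((N : ℝ) ^ 2 / (((N : ℝ) - 1) * S)) := by field_simp
          _ ≤ S * (∑ i, (u i)⁻¹) := this
      linarith
    have h3 : (N : ℝ) / ((N : ℝ) - 1) = (N : ℝ) ^ 2 / ((N : ℝ) - 1) - N := by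
      field_simp; ring
    have h4 : (l0 z : ℝ) = ∑ i, (c i : ℝ) := by rw [hcard]; push_cast; rfl
    rw [h3, h4]
    linarith
  -- l0 z ≤ 2 * l0 x
  have hl0z : l0 z ≤ l0 y + l0 x := by
    have hsub : (Finset.univ.filter fun j => z j ≠ 0) ⊆
        (Finset.univ.filter fun j => y j ≠ 0) ∪ (Finset.univ.filter fun j => x j ≠ 0) := by
      intro j hj
      simp only [Finset.mem_filter, Finset.mem_univ, true_and, Finset.mem_union] at hj ⊢
      by_contra hcon
      push_neg at hcon
      exact hj (by simp [hzdef, hcon.1, hcon.2])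
    exact le_trans (Finset.card_le_card hsub) (Finset.card_union_le _ _)
  have hl0z2 : (l0 z : ℝ) ≤ 2 * (l0 x : ℝ) := by
    have : l0 z ≤ 2 * l0 x := le_trans hl0z (by omega)
    exact_mod_cast this
  -- final contradiction
  have hd : (0 : ℝ) < 2 * ((N : ℝ) - 1) * μ := by positivity
  have hs2 : (l0 x : ℝ) * (2 * ((N : ℝ) - 1) * μ) < N := by
    rw [← lt_div_iff₀ hd]; exact hsparse
  have ha : (N : ℝ) ≤ ((N : ℝ) - 1) * (μ * (l0 z : ℝ)) := by
    rw [div_le_iff₀ hN1pos] at hmain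
    linarith [hmain]
  nlinarith [ha, hl0z2, hs2, hμ.le, (Nat.cast_nonneg (l0 x) : (0:ℝ) ≤ _)]
end

section
/- Let A ∈ ℝ^{m×n} have unit ℓ²-norm columns a₁,…,aₙ and suppose μ > 0 satisfies |⟨a_j, a_k⟩| ≤ μ for all j ≠ k. If x ∈ ℝⁿ satisfies Ax = b and ‖x‖₀ < (1 + μ)/(2μ), then x is the unique sparsest solution: every y with Ay = b and ‖y‖₀ ≤ ‖x‖₀ satisfies y = x. -/
/-- **Classical coherence-based uniqueness of sparse recovery.**
If `A` has unit-norm columns with mutual coherence bounded by `μ > 0`, and `x` solves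
`A x = b` with `‖x‖₀ < (1 + μ) / (2μ)`, then `x` is the unique sparsest solution. -/
theorem coherence_uniqueness {m n : ℕ}
    (A : Matrix (Fin m) (Fin n) ℝ)
    (hunit : ∀ j, ∑ i, A i j * A i j = 1)
    (μ : ℝ) (hμ : 0 < μ)
    (hcoh : ∀ j k, j ≠ k → |∑ i, A i j * A i k| ≤ μ)
    (x : Fin n → ℝ) (b : Fin m → ℝ) (hx : A.mulVec x = b)
    (hsparse : (l0 x : ℝ) < (1 + μ) / (2 * μ)) :
    ∀ y : Fin n → ℝ, A.mulVec y = b → l0 y ≤ l0 x → y = x := by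
  intro y hy hly
  by_contra hne
  set z : Fin n → ℝ := y - x with hzdef
  have hz0 : A.mulVec z = 0 := by
    rw [hzdef, Matrix.mulVec_sub, hy, hx, sub_self]
  have hzne : z ≠ 0 := fun h => hne (sub_eq_zero.mp h)
  -- support of z
  set S : Finset (Fin n) := Finset.univ.filter (fun k => z k ≠ 0) with hSdef
  have hSne : S.Nonempty := by
    obtain ⟨k, hk⟩ := Function.ne_iff.mp hzne
    refine ⟨k, ?_⟩
    simp only [hSdef, Finset.mem_filter, Finset.mem_univ, true_and]
    simpa using hk
  -- support bound: S ⊆ supp y ∪ supp x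
  have hScard : (S.card : ℝ) < (1 + μ) / μ := by
    have hsub : S ⊆ (Finset.univ.filter fun k => y k ≠ 0) ∪
        (Finset.univ.filter fun k => x k ≠ 0) := by
      intro k hk
      simp only [hSdef, Finset.mem_filter, Finset.mem_univ, true_and] at hk
      by_contra h
      simp only [Finset.mem_union, Finset.mem_filter, Finset.mem_univ, true_and,
        not_or, not_not] at h
      exact hk (by simp [hzdef, h.1, h.2])
    have h1 : S.card ≤ l0 y + l0 x :=
      le_trans (Finset.card_le_card hsub) (Finset.card_union_le _ _)
    have h2 : (S.card : ℝ) ≤ 2 * (l0 x : ℝ) := by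
      have : (S.card : ℝ) ≤ (l0 y : ℝ) + (l0 x : ℝ) := by exact_mod_cast h1
      have hly' : (l0 y : ℝ) ≤ (l0 x : ℝ) := by exact_mod_cast hly
      linarith
    have : 2 * (l0 x : ℝ) < (1 + μ) / μ := by
      rw [lt_div_iff₀ (by positivity : (0:ℝ) < 2 * μ)] at hsparse
      rw [lt_div_iff₀ hμ]
      nlinarith
    linarith
  -- pick j maximizing |z j|
  obtain ⟨j, hjS, hjmax⟩ := S.exists_max_image (fun k => |z k|) hSne
  have hzj : z j ≠ 0 := by
    simpa [hSdef] using hjS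
  have hzjpos : 0 < |z j| := abs_pos.mpr hzj
  -- the key identity: ⟨a_j, A z⟩ = 0
  have hkey : ∑ k, (∑ i, A i j * A i k) * z k = 0 := by
    have h0 : ∑ i, A i j * (A.mulVec z) i = 0 := by
      rw [hz0]; simp
    rw [show (∑ i, A i j * (A.mulVec z) i) = ∑ k, (∑ i, A i j * A i k) * z k from ?_] at h0
    · exact h0
    simp only [Matrix.mulVec, dotProduct, Finset.mul_sum, Finset.sum_mul]
    rw [Finset.sum_comm]
    congr 1; ext k; congr 1; ext i; ring
  -- split off the j term
  have hsplit : z j + ∑ k ∈ Finset.univ.erase j, (∑ i, A i j * A i k) * z k = 0 := by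
    have h := hkey
    rw [← Finset.add_sum_erase Finset.univ (fun k => (∑ i, A i j * A i k) * z k)
      (Finset.mem_univ j)] at h
    simpa [hunit j] using h
  have habs : |z j| ≤ ∑ k ∈ Finset.univ.erase j, |(∑ i, A i j * A i k) * z k| := by
    have : z j = -(∑ k ∈ Finset.univ.erase j, (∑ i, A i j * A i k) * z k) := by
      linarith
    rw [this, abs_neg]
    exact Finset.abs_sum_le_sum_abs _ _
  -- shrink sum to S.erase j
  have hshrink : ∑ k ∈ Finset.univ.erase j, |(∑ i, A i j * A i k) * z k|
      = ∑ k ∈ S.erase j, |(∑ i, A i j * A i k) * z k| := by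
    refine (Finset.sum_subset ?_ ?_).symm
    · exact Finset.erase_subset_erase _ (Finset.subset_univ _)
    · intro k _ hk
      have hzk : z k = 0 := by
        by_contra h
        exact hk (Finset.mem_erase.mpr ⟨by
          rename_i hmem
          exact (Finset.mem_erase.mp hmem).1, by simp [hSdef, h]⟩)
      simp [hzk]
  -- bound each term by μ * |z j|
  have hbound : ∑ k ∈ S.erase j, |(∑ i, A i j * A i k) * z k|
      ≤ (S.erase j).card * (μ * |z j|) := by
    calc ∑ k ∈ S.erase j, |(∑ i, A i j * A i k) * z k|
        ≤ ∑ _k ∈ S.erase j, μ * |z j| := Finset.sum_le_sum ?_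
      _ = (S.erase j).card * (μ * |z j|) := by
          rw [Finset.sum_const, nsmul_eq_mul]
    intro k hk
    have hkj : k ≠ j := (Finset.mem_erase.mp hk).1
    have hkS : k ∈ S := (Finset.mem_erase.mp hk).2
    rw [abs_mul]
    have h1 : |∑ i, A i j * A i k| ≤ μ := hcoh j k (Ne.symm hkj)
    have h2 : |z k| ≤ |z j| := hjmax k hkS
    exact mul_le_mul h1 h2 (abs_nonneg _) (le_of_lt hμ)
  -- card bound
  have hcard' : ((S.erase j).card : ℝ) = (S.card : ℝ) - 1 := by
    rw [Finset.card_erase_of_mem hjS]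
    have : 1 ≤ S.card := Finset.card_pos.mpr ⟨j, hjS⟩
    push_cast [Nat.cast_sub this]
    ring
  have hmu1 : ((S.erase j).card : ℝ) * μ < 1 := by
    rw [hcard']
    have : (S.card : ℝ) * μ < 1 + μ := (lt_div_iff₀ hμ).mp hScard
    nlinarith
  have : |z j| < |z j| := by
    calc |z j| ≤ ∑ k ∈ S.erase j, |(∑ i, A i j * A i k) * z k| := by
          rw [← hshrink]; exact habs
      _ ≤ (S.erase j).card * (μ * |z j|) := hbound
      _ = ((S.erase j).card * μ) * |z j| := by ring
      _ < 1 * |z j| := by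
          exact mul_lt_mul_of_pos_right hmu1 hzjpos
      _ = |z j| := one_mul _
  exact lt_irrefl _ this
end

section
/- Let A ∈ ℝ^{m×n} have unit ℓ²-norm columns a₁,…,aₙ, partitioned into N blocks via π : {1,…,n} → {1,…,N}. Suppose μ > 0 satisfies |⟨a_j, a_k⟩| ≤ μ for all j ≠ k, and there are constants α_i ∈ [0,1) with |⟨a_j, a_k⟩| ≤ α_i μ whenever j ≠ k and π(j) = π(k) = i. Let S ⊆ {1,…,n} be a support set with S_i = S ∩ (block i) of cardinality s_i ≥ 1 for each i, and let Z be an index maximizing (1 + α_i μ)/((1 − α_i) s_i) over i = 1,…,N. If 2·Σ_{i=1}^{N} μ s_i/(1 + α_i μ + (1 − α_i) μ s_i) < (1 + α_Z μ + 2(1 − α_Z)μ s_Z)/(1 + α_Z μ + (1 − α_Z)μ s_Z), then the Gram matrix A_Sᵀ A_S is invertible and the Exact Recovery Condition holds: ‖(A_Sᵀ A_S)⁻¹ A_Sᵀ a_j‖₁ < 1 for every column index j ∉ S. -/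
/-- The Gram matrix `A_Sᵀ A_S` of the columns of `A` indexed by the finite set `S`. -/
noncomputable def gram {m n : ℕ} (A : Matrix (Fin m) (Fin n) ℝ) (S : Finset (Fin n)) :
    Matrix ↥S ↥S ℝ :=
  Matrix.of fun j k : ↥S => ∑ i, A i (j : Fin n) * A i (k : Fin n)

open Finset

private lemma block_ineq {m n N : ℕ}
    (A : Matrix (Fin m) (Fin n) ℝ) (π : Fin n → Fin N)
    (hunit : ∀ j, ∑ i, A i j * A i j = 1)
    (μ : ℝ)
    (hcoh : ∀ j k, j ≠ k → |∑ i, A i j * A i k| ≤ μ)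
    (α : Fin N → ℝ)
    (hblock : ∀ j k, j ≠ k → π j = π k → |∑ i, A i j * A i k| ≤ α (π j) * μ)
    (S : Finset (Fin n)) (x : ↥S → ℝ) (i : Fin N) :
    (1 + α i * μ + (1 - α i) * μ * ((univ.filter fun k : ↥S => π k.1 = i).card : ℝ)) *
        (∑ k ∈ univ.filter (fun k : ↥S => π k.1 = i), |x k|)
      ≤ (∑ k ∈ univ.filter (fun k : ↥S => π k.1 = i), |(gram A S).mulVec x k|)
        + μ * ((univ.filter fun k : ↥S => π k.1 = i).card : ℝ) * ∑ k, |x k| := by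
  classical
  set T : Finset ↥S := univ.filter (fun k : ↥S => π k.1 = i) with hT
  set u : ℝ := ∑ k ∈ T, |x k| with hu
  set U : ℝ := ∑ k, |x k| with hU
  -- per element bound
  have hper : ∀ k ∈ T, (1 + α i * μ) * |x k| ≤
      |(gram A S).mulVec x k| + α i * μ * u + μ * (U - u) := by
    intro k hk
    have hki : π k.1 = i := (mem_filter.mp hk).2
    have hb : (gram A S).mulVec x k = x k + ∑ l ∈ univ.erase k, gram A S k l * x l := by
      have : (gram A S).mulVec x k = ∑ l, gram A S k l * x l := rfl
      rw [this, ← Finset.add_sum_erase _ _ (mem_univ k)]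
      have hkk : gram A S k k = 1 := hunit k.1
      rw [hkk, one_mul]
    have hxk : |x k| ≤ |(gram A S).mulVec x k| + ∑ l ∈ univ.erase k, |gram A S k l| * |x l| := by
      have : x k = (gram A S).mulVec x k - ∑ l ∈ univ.erase k, gram A S k l * x l := by
        rw [hb]; ring
      calc |x k| = |(gram A S).mulVec x k - ∑ l ∈ univ.erase k, gram A S k l * x l| := by
              rw [← this]
        _ ≤ |(gram A S).mulVec x k| + |∑ l ∈ univ.erase k, gram A S k l * x l| :=
              abs_sub _ _
        _ ≤ |(gram A S).mulVec x k| + ∑ l ∈ univ.erase k, |gram A S k l * x l| := by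
              gcongr; exact Finset.abs_sum_le_sum_abs _ _
        _ = _ := by simp [abs_mul]
    -- split the erase sum
    have hsplit : ∑ l ∈ univ.erase k, |gram A S k l| * |x l|
        = (∑ l ∈ T.erase k, |gram A S k l| * |x l|)
          + ∑ l ∈ univ.filter (fun l : ↥S => ¬ π l.1 = i), |gram A S k l| * |x l| := by
      rw [← Finset.sum_filter_add_sum_filter_not (univ.erase k) (fun l : ↥S => π l.1 = i)]
      congr 1
      · rw [Finset.filter_erase, hT]
      · rw [Finset.filter_erase]
        rw [Finset.erase_eq_of_notMem]
        simp [hki]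
    have h1 : ∑ l ∈ T.erase k, |gram A S k l| * |x l| ≤ α i * μ * (u - |x k|) := by
      have : ∑ l ∈ T.erase k, |gram A S k l| * |x l| ≤ ∑ l ∈ T.erase k, α i * μ * |x l| := by
        apply Finset.sum_le_sum
        intro l hl
        have hli : π l.1 = i := (mem_filter.mp (Finset.mem_of_mem_erase hl)).2
        have hne : (k : Fin n) ≠ (l : Fin n) := by
          intro h
          exact (Finset.ne_of_mem_erase hl).symm (Subtype.coe_injective h)
        have := hblock k.1 l.1 hne (by rw [hki, hli])
        rw [hki] at this
        exact mul_le_mul_of_nonneg_right this (abs_nonneg _)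
      rw [← Finset.mul_sum] at this
      have herase : ∑ l ∈ T.erase k, |x l| = u - |x k| := by
        rw [hu, ← Finset.add_sum_erase _ _ hk]; ring
      rw [herase] at this; exact this
    have h2 : ∑ l ∈ univ.filter (fun l : ↥S => ¬ π l.1 = i), |gram A S k l| * |x l|
        ≤ μ * (U - u) := by
      have : ∑ l ∈ univ.filter (fun l : ↥S => ¬ π l.1 = i), |gram A S k l| * |x l|
          ≤ ∑ l ∈ univ.filter (fun l : ↥S => ¬ π l.1 = i), μ * |x l| := by
        apply Finset.sum_le_sum
        intro l hl
        have hli : ¬ π l.1 = i := (mem_filter.mp hl).2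
        have hne : (k : Fin n) ≠ (l : Fin n) := by
          intro h; apply hli; rw [← h, hki]
        exact mul_le_mul_of_nonneg_right (hcoh k.1 l.1 hne) (abs_nonneg _)
      rw [← Finset.mul_sum] at this
      have hrest : ∑ l ∈ univ.filter (fun l : ↥S => ¬ π l.1 = i), |x l| = U - u := by
        rw [hU, hu, hT, ← Finset.sum_filter_add_sum_filter_not univ (fun l : ↥S => π l.1 = i)
          (fun l => |x l|)]
        ring
      rw [hrest] at this; exact this
    have := hxk
    rw [hsplit] at this
    nlinarith [this, h1, h2]
  -- sum over T
  have hsum := Finset.sum_le_sum hper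
  rw [← Finset.mul_sum, Finset.sum_add_distrib, Finset.sum_add_distrib,
    Finset.sum_const, Finset.sum_const, nsmul_eq_mul, nsmul_eq_mul] at hsum
  nlinarith [hsum]

/-- **Piecewise Exact Recovery Condition.**
Suppose `A` has unit-norm columns partitioned into `N` blocks by `π`, overall coherence
bounded by `μ > 0`, within-block coherence of block `i` bounded by `α i * μ` with
`α i ∈ [0,1)`.  Let `S` be a support set meeting block `i` in `s i ≥ 1` columns, and let
`Z` maximize `(1 + α i μ)/((1 - α i) s i)`.  If
`2 ∑ i, μ s i / (1 + α i μ + (1 - α i) μ s i) <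
  (1 + α Z μ + 2 (1 - α Z) μ s Z)/(1 + α Z μ + (1 - α Z) μ s Z)`,
then the Gram matrix `A_Sᵀ A_S` is invertible and the Exact Recovery Condition
`‖(A_Sᵀ A_S)⁻¹ A_Sᵀ a_j‖₁ < 1` holds for every column index `j ∉ S`. -/
theorem piecewise_erc {m n N : ℕ}
    (A : Matrix (Fin m) (Fin n) ℝ) (π : Fin n → Fin N)
    (hunit : ∀ j, ∑ i, A i j * A i j = 1)
    (μ : ℝ) (hμ : 0 < μ)
    (hcoh : ∀ j k, j ≠ k → |∑ i, A i j * A i k| ≤ μ)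
    (α : Fin N → ℝ) (hα0 : ∀ i, 0 ≤ α i) (hα1 : ∀ i, α i < 1)
    (hblock : ∀ j k, j ≠ k → π j = π k → |∑ i, A i j * A i k| ≤ α (π j) * μ)
    (S : Finset (Fin n))
    (s : Fin N → ℕ) (hs : ∀ i, s i = (S.filter fun j => π j = i).card)
    (hs1 : ∀ i, 1 ≤ s i)
    (Z : Fin N)
    (hZ : ∀ i, (1 + α i * μ) / ((1 - α i) * (s i : ℝ)) ≤
      (1 + α Z * μ) / ((1 - α Z) * (s Z : ℝ)))
    (hcond : 2 * ∑ i, μ * (s i : ℝ) / (1 + α i * μ + (1 - α i) * μ * (s i : ℝ)) <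
      (1 + α Z * μ + 2 * (1 - α Z) * μ * (s Z : ℝ)) /
        (1 + α Z * μ + (1 - α Z) * μ * (s Z : ℝ))) :
    IsUnit (gram A S) ∧
      ∀ j ∉ S, ∑ k : ↥S,
        |Matrix.mulVec (gram A S)⁻¹ (fun l : ↥S => ∑ i, A i (l : Fin n) * A i j) k| < 1 := by
  classical
  set G := gram A S with hG
  set T : Fin N → Finset ↥S := fun i => univ.filter (fun k : ↥S => π k.1 = i) with hTdef
  have hcardn : ∀ i, (T i).card = s i := by
    intro i
    rw [hs i]
    apply Finset.card_bij (fun (k : ↥S) _ => k.1)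
    · intro a ha
      simp only [hTdef, mem_filter, mem_univ, true_and] at ha
      simp only [mem_filter]
      exact ⟨a.2, ha⟩
    · intro a _ b _ h; exact Subtype.coe_injective h
    · intro b hb
      simp only [mem_filter] at hb
      exact ⟨⟨b, hb.1⟩, by simp [hTdef, hb.2], rfl⟩
  have hcard : ∀ i, ((T i).card : ℝ) = (s i : ℝ) := fun i => by rw [hcardn i]
  set β : Fin N → ℝ := fun i => 1 + α i * μ + (1 - α i) * μ * (s i : ℝ) with hβdef
  have hs1' : ∀ i, (1 : ℝ) ≤ (s i : ℝ) := fun i => by exact_mod_cast hs1 i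
  have hβpos : ∀ i, 0 < β i := by
    intro i
    have h1 := hα0 i; have h2 := hα1 i; have h3 := hs1' i
    show 0 < 1 + α i * μ + (1 - α i) * μ * (s i : ℝ)
    nlinarith [mul_nonneg h1 hμ.le, mul_pos (mul_pos (by linarith : (0:ℝ) < 1 - α i) hμ) (by linarith : (0:ℝ) < (s i : ℝ))]
  set c : ℝ := ∑ i, μ * (s i : ℝ) / β i with hcdef
  set δ : Fin N → ℝ := fun i => (1 - α i) * μ * (s i : ℝ) / β i with hδdef
  -- key inequality
  have hkey : ∀ x : ↥S → ℝ,
      (∑ k, |x k|) ≤ (∑ i, (∑ k ∈ T i, |G.mulVec x k|) / β i) + c * ∑ k, |x k| := by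
    intro x
    have hfib : ∑ i, ∑ k ∈ T i, |x k| = ∑ k, |x k| :=
      Finset.sum_fiberwise univ (fun k : ↥S => π k.1) (fun k => |x k|)
    have hblocki : ∀ i ∈ (univ : Finset (Fin N)), ∑ k ∈ T i, |x k| ≤
        (∑ k ∈ T i, |G.mulVec x k|) / β i + μ * (s i : ℝ) / β i * ∑ k, |x k| := by
      intro i _
      have hb := block_ineq A π hunit μ hcoh α hblock S x i
      rw [hcard i] at hb
      rw [show (∑ k ∈ T i, |G.mulVec x k|) / β i + μ * (s i : ℝ) / β i * ∑ k, |x k|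
          = ((∑ k ∈ T i, |G.mulVec x k|) + μ * (s i : ℝ) * ∑ k, |x k|) / β i by ring,
        le_div_iff₀ (hβpos i)]
      calc (∑ k ∈ T i, |x k|) * β i = β i * ∑ k ∈ T i, |x k| := by ring
        _ ≤ _ := hb
    calc ∑ k, |x k| = ∑ i, ∑ k ∈ T i, |x k| := hfib.symm
      _ ≤ ∑ i, ((∑ k ∈ T i, |G.mulVec x k|) / β i + μ * (s i : ℝ) / β i * ∑ k, |x k|) :=
          Finset.sum_le_sum hblocki
      _ = (∑ i, (∑ k ∈ T i, |G.mulVec x k|) / β i) + c * ∑ k, |x k| := by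
          rw [Finset.sum_add_distrib, ← Finset.sum_mul]
  -- δ i < 1 and c < 1
  have hδlt1 : ∀ i, δ i < 1 := by
    intro i
    show (1 - α i) * μ * (s i : ℝ) / β i < 1
    rw [div_lt_one (hβpos i)]
    show (1 - α i) * μ * (s i : ℝ) < 1 + α i * μ + (1 - α i) * μ * (s i : ℝ)
    nlinarith [mul_nonneg (hα0 i) hμ.le]
  have hcond' : 2 * c < 1 + δ Z := by
    have hrw : (1 + α Z * μ + 2 * (1 - α Z) * μ * (s Z : ℝ)) / β Z = 1 + δ Z := by
      show _ = 1 + (1 - α Z) * μ * (s Z : ℝ) / β Z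
      have hβne := (hβpos Z).ne'
      rw [div_eq_iff hβne]
      show 1 + α Z * μ + 2 * (1 - α Z) * μ * (s Z : ℝ)
          = (1 + (1 - α Z) * μ * (s Z : ℝ) / β Z) * (1 + α Z * μ + (1 - α Z) * μ * (s Z : ℝ))
      field_simp
      ring
    calc 2 * c < (1 + α Z * μ + 2 * (1 - α Z) * μ * (s Z : ℝ)) / β Z := hcond
      _ = 1 + δ Z := hrw
  have hc1 : c < 1 := by have := hδlt1 Z; linarith
  -- invertibility
  have hUnit : IsUnit G := by
    rw [← Matrix.mulVec_injective_iff_isUnit]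
    intro x y hxy
    have h0 : G.mulVec (x - y) = 0 := by
      rw [Matrix.mulVec_sub, hxy, sub_self]
    have hk := hkey (x - y)
    rw [h0] at hk
    simp only [Pi.zero_apply, abs_zero, Finset.sum_const_zero, zero_div, zero_add] at hk
    have hU0 : ∑ k, |(x - y) k| ≤ 0 := by nlinarith
    have hinn : ∀ k ∈ (univ : Finset ↥S), |(x - y) k| = 0 := by
      rw [← Finset.sum_eq_zero_iff_of_nonneg (fun k _ => abs_nonneg _)]
      have : (0:ℝ) ≤ ∑ k, |(x - y) k| := Finset.sum_nonneg fun k _ => abs_nonneg _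
      linarith
    have : x - y = 0 := funext fun k => abs_eq_zero.mp (hinn k (mem_univ k))
    exact sub_eq_zero.mp this
  refine ⟨hUnit, ?_⟩
  -- ERC
  intro j hj
  set b : ↥S → ℝ := fun l => ∑ i, A i l.1 * A i j with hbdef
  set x : ↥S → ℝ := G⁻¹.mulVec b with hxdef
  have hGx : G.mulVec x = b := by
    rw [hxdef, Matrix.mulVec_mulVec,
      Matrix.mul_nonsing_inv _ ((Matrix.isUnit_iff_isUnit_det G).mp hUnit),
      Matrix.one_mulVec]
  set U : ℝ := ∑ k, |x k| with hUdef
  have hB : ∀ i, ∑ k ∈ T i, |b k| ≤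
      (if i = π j then α (π j) * μ * (s i : ℝ) else μ * (s i : ℝ)) := by
    intro i
    have hbound : ∀ k ∈ T i, |b k| ≤ (if i = π j then α (π j) * μ else μ) := by
      intro k hk
      have hki : π k.1 = i := by
        simpa [hTdef] using hk
      have hne : (k : Fin n) ≠ j := fun h => hj (h ▸ k.2)
      by_cases h : i = π j
      · rw [if_pos h]
        have := hblock k.1 j hne (by rw [hki, h])
        rwa [hki, h] at this
      · rw [if_neg h]
        exact hcoh k.1 j hne
    calc ∑ k ∈ T i, |b k| ≤ ∑ _k ∈ T i, (if i = π j then α (π j) * μ else μ) :=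
          Finset.sum_le_sum hbound
      _ = ((T i).card : ℝ) * (if i = π j then α (π j) * μ else μ) := by
          rw [Finset.sum_const, nsmul_eq_mul]
      _ = (if i = π j then α (π j) * μ * (s i : ℝ) else μ * (s i : ℝ)) := by
          rw [hcard i]; by_cases h : i = π j <;> simp [h] <;> ring
  have hBsum : ∑ i, (∑ k ∈ T i, |b k|) / β i ≤ c - δ (π j) := by
    have hterm : ∀ i ∈ (univ : Finset (Fin N)), (∑ k ∈ T i, |b k|) / β i ≤
        μ * (s i : ℝ) / β i - (if i = π j then δ (π j) else 0) := by
      intro i _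
      have h1 : (∑ k ∈ T i, |b k|) / β i ≤
          (if i = π j then α (π j) * μ * (s i : ℝ) else μ * (s i : ℝ)) / β i :=
        (div_le_div_iff_of_pos_right (hβpos i)).mpr (hB i)
      refine h1.trans_eq ?_
      by_cases h : i = π j
      · subst h
        rw [if_pos rfl, if_pos rfl]
        show α (π j) * μ * (s (π j) : ℝ) / β (π j)
            = μ * (s (π j) : ℝ) / β (π j) - (1 - α (π j)) * μ * (s (π j) : ℝ) / β (π j)
        rw [div_sub_div_same]
        congr 1
        ring
      · rw [if_neg h, if_neg h, sub_zero]
    calc ∑ i, (∑ k ∈ T i, |b k|) / β i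
        ≤ ∑ i, (μ * (s i : ℝ) / β i - (if i = π j then δ (π j) else 0)) :=
          Finset.sum_le_sum hterm
      _ = c - δ (π j) := by
          rw [Finset.sum_sub_distrib, Finset.sum_ite_eq' univ (π j) (fun _ => δ (π j)),
            if_pos (mem_univ _)]
  have hδmono : δ Z ≤ δ (π j) := by
    have hzp := hZ (π j)
    have hp : ∀ i, (0:ℝ) < 1 + α i * μ := fun i => by nlinarith [hα0 i, hμ.le]
    have hq : ∀ i, (0:ℝ) < (1 - α i) * (s i : ℝ) := fun i => by nlinarith [hα1 i, hs1' i]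
    rw [div_le_div_iff₀ (hq (π j)) (hq Z)] at hzp
    show (1 - α Z) * μ * (s Z : ℝ) / β Z ≤ (1 - α (π j)) * μ * (s (π j) : ℝ) / β (π j)
    rw [div_le_div_iff₀ (hβpos Z) (hβpos (π j))]
    show (1 - α Z) * μ * (s Z : ℝ) * (1 + α (π j) * μ + (1 - α (π j)) * μ * (s (π j) : ℝ))
        ≤ (1 - α (π j)) * μ * (s (π j) : ℝ) * (1 + α Z * μ + (1 - α Z) * μ * (s Z : ℝ))
    nlinarith [hzp, hμ, hq Z, hq (π j)]
  -- conclude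
  have hk := hkey x
  rw [hGx] at hk
  have hfinal : U * (1 - c) ≤ c - δ (π j) := by
    have := hk.trans (by linarith [hBsum] : (∑ i, (∑ k ∈ T i, |b k|) / β i) + c * U ≤ (c - δ (π j)) + c * U)
    nlinarith [this]
  have hUnn : (0:ℝ) ≤ U := Finset.sum_nonneg fun k _ => abs_nonneg _
  have : U * (1 - c) < 1 - c := by
    calc U * (1 - c) ≤ c - δ (π j) := hfinal
      _ ≤ c - δ Z := by linarith [hδmono]
      _ < 1 - c := by linarith [hcond']
  nlinarith [this, hc1]
end

section
/- Let A = [A₁, A₂] ∈ ℝ^{m×n} have unit ℓ²-norm columns partitioned into two blocks. Suppose μ > 0 satisfies |⟨a_j, a_k⟩| ≤ μ for all distinct columns, and α₁, α₂ ∈ [0,1) with α₁ ≥ α₂ satisfy |⟨a_j, a_k⟩| ≤ α_i μ for distinct columns within block i (i = 1,2). Let S be a support set with s_i = |S ∩ (block i)|, 1 ≤ s₁ ≤ s₂. If (1 + α₂μ + (1 − α₂)μ s₂)(2α₁μ s₁ − α₁μ − 1) + 2μ s₂(1 + α₁μ + (1 − α₁)μ s₁) < 0, then the Gram matrix A_Sᵀ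 A_S is invertible and ‖(A_Sᵀ A_S)⁻¹ A_Sᵀ a_j‖₁ < 1 for every column index j ∉ S. -/
open Finset in
lemma block_abs_bound {ι : Type*} [Fintype ι] [DecidableEq ι]
    (G : Matrix ι ι ℝ) (x v : ι → ℝ)
    (hGx : ∀ k, ∑ l, G k l * x l = v k)
    (hdiag : ∀ k, G k k = 1)
    (P Q : Finset ι) (huniv : P ∪ Q = univ) (hdisj : Disjoint P Q)
    (c d : ℝ) (hd : 0 ≤ d)
    (hin : ∀ k ∈ P, ∀ l ∈ P, k ≠ l → |G k l| ≤ c)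
    (hcross : ∀ k ∈ P, ∀ l ∈ Q, |G k l| ≤ d) :
    ∑ k ∈ P, |x k| ≤ ∑ k ∈ P, |v k| + c * ((P.card : ℝ) - 1) * ∑ l ∈ P, |x l|
      + d * P.card * ∑ l ∈ Q, |x l| := by
  set E : ι → ι → ℝ := fun k l => if k = l then 0 else G k l with hE
  have hxk : ∀ k, x k = v k - ∑ l, E k l * x l := by
    intro k
    have h := hGx k
    have h2 : ∑ l, G k l * x l = (∑ l, E k l * x l) + x k := by
      have : ∀ l ∈ (univ : Finset ι), G k l * x l
          = E k l * x l + (if k = l then x l else 0) := by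
        intro l _
        by_cases hkl : k = l
        · subst hkl; simp [hE, hdiag k]
        · simp [hE, hkl]
      rw [Finset.sum_congr rfl this, Finset.sum_add_distrib, Finset.sum_ite_eq]
      simp
    have := h2.symm.trans h
    linarith
  have step1 : ∀ k ∈ P, |x k| ≤ |v k| + ∑ l, |E k l| * |x l| := by
    intro k _
    rw [hxk k]
    refine (abs_sub _ _).trans ?_
    gcongr
    refine (Finset.abs_sum_le_sum_abs _ _).trans ?_
    apply le_of_eq
    exact Finset.sum_congr rfl fun l _ => abs_mul _ _
  have step2 : ∑ k ∈ P, |x k| ≤ ∑ k ∈ P, |v k| + ∑ k ∈ P, ∑ l, |E k l| * |x l| := by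
    calc ∑ k ∈ P, |x k| ≤ ∑ k ∈ P, (|v k| + ∑ l, |E k l| * |x l|) :=
          Finset.sum_le_sum step1
      _ = _ := Finset.sum_add_distrib
  have swap : ∑ k ∈ P, ∑ l, |E k l| * |x l|
      = (∑ l ∈ P, ∑ k ∈ P, |E k l| * |x l|) + ∑ l ∈ Q, ∑ k ∈ P, |E k l| * |x l| := by
    rw [Finset.sum_comm, ← Finset.sum_union hdisj, huniv]
  have inP : ∀ l ∈ P, ∑ k ∈ P, |E k l| * |x l| ≤ c * ((P.card : ℝ) - 1) * |x l| := by
    intro l hl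
    rw [← Finset.sum_mul]
    apply mul_le_mul_of_nonneg_right _ (abs_nonneg _)
    have he : ∑ k ∈ P, |E k l| = ∑ k ∈ P.erase l, |E k l| := by
      rw [← Finset.add_sum_erase P _ hl]
      simp [hE]
    rw [he]
    calc ∑ k ∈ P.erase l, |E k l| ≤ ∑ k ∈ P.erase l, c := by
          apply Finset.sum_le_sum
          intro k hk
          have hkne : k ≠ l := (Finset.mem_erase.1 hk).1
          have hkP : k ∈ P := (Finset.mem_erase.1 hk).2
          simpa [hE, hkne] using hin k hkP l hl hkne
      _ = ((P.card : ℝ) - 1) * c := by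
          rw [Finset.sum_const, Finset.card_erase_of_mem hl, nsmul_eq_mul]
          have : (1 : ℕ) ≤ P.card := Finset.card_pos.2 ⟨l, hl⟩
          push_cast [Nat.cast_sub this]
          ring
      _ = c * ((P.card : ℝ) - 1) := by ring
  have inQ : ∀ l ∈ Q, ∑ k ∈ P, |E k l| * |x l| ≤ d * (P.card : ℝ) * |x l| := by
    intro l hl
    rw [← Finset.sum_mul]
    apply mul_le_mul_of_nonneg_right _ (abs_nonneg _)
    calc ∑ k ∈ P, |E k l| ≤ ∑ k ∈ P, d := by
          apply Finset.sum_le_sum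
          intro k hk
          by_cases hkl : k = l
          · simp [hE, hkl, hd]
          · simpa [hE, hkl] using hcross k hk l hl
      _ = d * (P.card : ℝ) := by rw [Finset.sum_const, nsmul_eq_mul]; ring
  have finP : ∑ l ∈ P, ∑ k ∈ P, |E k l| * |x l|
      ≤ c * ((P.card : ℝ) - 1) * ∑ l ∈ P, |x l| := by
    rw [Finset.mul_sum]; exact Finset.sum_le_sum inP
  have finQ : ∑ l ∈ Q, ∑ k ∈ P, |E k l| * |x l|
      ≤ d * (P.card : ℝ) * ∑ l ∈ Q, |x l| := by
    rw [Finset.mul_sum]; exact Finset.sum_le_sum inQ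
  linarith [step2, swap, finP, finQ]

set_option maxHeartbeats 2000000 in
/-- **Exact Recovery Condition for a union of two general bases.**
Suppose `A = [A₁, A₂]` has unit-norm columns partitioned into two blocks by `π`, overall
coherence bounded by `μ > 0`, within-block coherences bounded by `α₁ μ` and `α₂ μ` with
`α₁, α₂ ∈ [0,1)` and `α₁ ≥ α₂`.  Let `S` meet block `1` in `s₁` columns and block `2` in
`s₂` columns with `1 ≤ s₁ ≤ s₂`.  If
`(1 + α₂μ + (1 - α₂)μ s₂)(2α₁μ s₁ - α₁μ - 1) + 2μ s₂ (1 + α₁μ + (1 - α₁)μ s₁) < 0`,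
then the Gram matrix `A_Sᵀ A_S` is invertible and the Exact Recovery Condition
`‖(A_Sᵀ A_S)⁻¹ A_Sᵀ a_j‖₁ < 1` holds for every column index `j ∉ S`. -/
theorem two_bases_erc {m n : ℕ}
    (A : Matrix (Fin m) (Fin n) ℝ) (π : Fin n → Fin 2)
    (hunit : ∀ j, ∑ i, A i j * A i j = 1)
    (μ : ℝ) (hμ : 0 < μ)
    (hcoh : ∀ j k, j ≠ k → |∑ i, A i j * A i k| ≤ μ)
    (α₁ α₂ : ℝ) (hα₁0 : 0 ≤ α₁) (hα₁1 : α₁ < 1) (hα₂0 : 0 ≤ α₂) (hα₂1 : α₂ < 1)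
    (hα : α₂ ≤ α₁)
    (hblock1 : ∀ j k, j ≠ k → π j = 0 → π k = 0 → |∑ i, A i j * A i k| ≤ α₁ * μ)
    (hblock2 : ∀ j k, j ≠ k → π j = 1 → π k = 1 → |∑ i, A i j * A i k| ≤ α₂ * μ)
    (S : Finset (Fin n))
    (s₁ s₂ : ℕ)
    (hs₁ : s₁ = (S.filter fun j => π j = 0).card)
    (hs₂ : s₂ = (S.filter fun j => π j = 1).card)
    (hs1 : 1 ≤ s₁) (hs12 : s₁ ≤ s₂)
    (hcond : (1 + α₂ * μ + (1 - α₂) * μ * (s₂ : ℝ)) *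
        (2 * α₁ * μ * (s₁ : ℝ) - α₁ * μ - 1) +
        2 * μ * (s₂ : ℝ) * (1 + α₁ * μ + (1 - α₁) * μ * (s₁ : ℝ)) < 0) :
    IsUnit (gram A S) ∧
      ∀ j ∉ S, ∑ k : ↥S,
        |Matrix.mulVec (gram A S)⁻¹ (fun l : ↥S => ∑ i, A i (l : Fin n) * A i j) k| < 1 := by
  classical
  have h2 : ∀ t : Fin 2, t = 0 ∨ t = 1 := by decide
  set G := gram A S with hG
  have hGdiag : ∀ k : ↥S, G k k = 1 := fun k => hunit k.1
  set P₁ := (Finset.univ : Finset ↥S).filter (fun k => π k.1 = 0) with hP₁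
  set P₂ := (Finset.univ : Finset ↥S).filter (fun k => π k.1 = 1) with hP₂
  have hmem1 : ∀ k : ↥S, k ∈ P₁ ↔ π k.1 = 0 := by intro k; simp [hP₁]
  have hmem2 : ∀ k : ↥S, k ∈ P₂ ↔ π k.1 = 1 := by intro k; simp [hP₂]
  have huniv : P₁ ∪ P₂ = Finset.univ := by
    ext k
    simp only [Finset.mem_union, hmem1, hmem2, Finset.mem_univ, iff_true]
    exact h2 (π k.1)
  have hdisj : Disjoint P₁ P₂ := by
    rw [Finset.disjoint_left]
    intro k hk1 hk2
    rw [hmem1] at hk1; rw [hmem2] at hk2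
    rw [hk1] at hk2
    exact absurd hk2 (by decide)
  have hcard1 : P₁.card = s₁ := by
    rw [hP₁, Finset.univ_eq_attach, Finset.filter_attach (fun j => π j = 0) S, hs₁]
    simp
  have hcard2 : P₂.card = s₂ := by
    rw [hP₂, Finset.univ_eq_attach, Finset.filter_attach (fun j => π j = 1) S, hs₂]
    simp
  -- Gram entry bounds
  have hGoff : ∀ k l : ↥S, k ≠ l → |G k l| ≤ μ := by
    intro k l hkl
    exact hcoh k.1 l.1 (fun h => hkl (Subtype.ext h))
  have hG00 : ∀ k l : ↥S, k ≠ l → π k.1 = 0 → π l.1 = 0 → |G k l| ≤ α₁ * μ := by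
    intro k l hkl h1 h2'
    exact hblock1 k.1 l.1 (fun h => hkl (Subtype.ext h)) h1 h2'
  have hG11 : ∀ k l : ↥S, k ≠ l → π k.1 = 1 → π l.1 = 1 → |G k l| ≤ α₂ * μ := by
    intro k l hkl h1 h2'
    exact hblock2 k.1 l.1 (fun h => hkl (Subtype.ext h)) h1 h2'
  have hne12 : ∀ k ∈ P₁, ∀ l ∈ P₂, k ≠ l := by
    intro k hk l hl h
    exact (Finset.disjoint_left.1 hdisj hk) (h ▸ hl)
  -- the key bound, applied to any solution of G x = v
  have KEY : ∀ (x v : ↥S → ℝ), (∀ k, ∑ l, G k l * x l = v k) →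
      (∑ k ∈ P₁, |x k| ≤ ∑ k ∈ P₁, |v k|
          + α₁ * μ * ((s₁ : ℝ) - 1) * ∑ l ∈ P₁, |x l| + μ * (s₁ : ℝ) * ∑ l ∈ P₂, |x l|)
      ∧ (∑ k ∈ P₂, |x k| ≤ ∑ k ∈ P₂, |v k|
          + α₂ * μ * ((s₂ : ℝ) - 1) * ∑ l ∈ P₂, |x l| + μ * (s₂ : ℝ) * ∑ l ∈ P₁, |x l|) := by
    intro x v hxv
    constructor
    · have := block_abs_bound G x v hxv hGdiag P₁ P₂ huniv hdisj (α₁ * μ) μ hμ.le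
        (fun k hk l hl hkl => hG00 k l hkl ((hmem1 k).1 hk) ((hmem1 l).1 hl))
        (fun k hk l hl => hGoff k l (hne12 k hk l hl))
      rwa [hcard1] at this
    · have := block_abs_bound G x v hxv hGdiag P₂ P₁ (by rw [Finset.union_comm]; exact huniv)
        hdisj.symm (α₂ * μ) μ hμ.le
        (fun k hk l hl hkl => hG11 k l hkl ((hmem2 k).1 hk) ((hmem2 l).1 hl))
        (fun k hk l hl => hGoff k l (fun h => hne12 l hl k hk h.symm))
      rwa [hcard2] at this
  -- real-number facts
  have ht1 : (1 : ℝ) ≤ (s₁ : ℝ) := by exact_mod_cast hs1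
  have ht12 : (s₁ : ℝ) ≤ (s₂ : ℝ) := by exact_mod_cast hs12
  have hs1R : (0:ℝ) ≤ (s₁ : ℝ) := by linarith
  have hs2R : (0:ℝ) ≤ (s₂ : ℝ) := by linarith
  have hβ₁pos : (0:ℝ) < 1 + α₁ * μ + (1 - α₁) * μ * (s₁ : ℝ) := by
    nlinarith [mul_nonneg (mul_nonneg (by linarith : (0:ℝ) ≤ 1 - α₁) hμ.le) hs1R,
      mul_nonneg hα₁0 hμ.le]
  have hβ₂pos : (0:ℝ) < 1 + α₂ * μ + (1 - α₂) * μ * (s₂ : ℝ) := by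
    nlinarith [mul_nonneg (mul_nonneg (by linarith : (0:ℝ) ≤ 1 - α₂) hμ.le) hs2R,
      mul_nonneg hα₂0 hμ.le]
  have K : (1 + α₁) * μ * (s₁ : ℝ) * (1 + α₂ * μ + (1 - α₂) * μ * (s₂ : ℝ))
      + 2 * μ * (s₂ : ℝ) * (1 + α₁ * μ + (1 - α₁) * μ * (s₁ : ℝ))
      < (1 + α₁ * μ + (1 - α₁) * μ * (s₁ : ℝ)) * (1 + α₂ * μ + (1 - α₂) * μ * (s₂ : ℝ)) := by
    nlinarith [hcond]
  have hmt1 : (0:ℝ) < μ * (s₁ : ℝ) := by nlinarith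
  have hmt2 : (0:ℝ) < μ * (s₂ : ℝ) := by nlinarith
  have F1 : (1 + α₁) * μ * (s₁ : ℝ) < 1 + α₁ * μ + (1 - α₁) * μ * (s₁ : ℝ) := by
    nlinarith [K, hβ₂pos, mul_pos hmt2 hβ₁pos]
  have F2 : 2 * μ * (s₂ : ℝ) < 1 + α₂ * μ + (1 - α₂) * μ * (s₂ : ℝ) := by
    nlinarith [K, hβ₁pos, mul_nonneg (mul_nonneg (mul_nonneg (by linarith : (0:ℝ) ≤ 1 + α₁) hμ.le) (by linarith : (0:ℝ) ≤ (s₁:ℝ))) hβ₂pos.le]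
  have ha₁pos : (0:ℝ) < 1 + α₁ * μ - α₁ * μ * (s₁ : ℝ) := by
    nlinarith [F1, mul_nonneg (mul_nonneg hα₁0 hμ.le) (by linarith : (0:ℝ) ≤ (s₁:ℝ))]
  have ha₂pos : (0:ℝ) < 1 + α₂ * μ - α₂ * μ * (s₂ : ℝ) := by nlinarith [F2]
  have hDpos : (0:ℝ) < (1 + α₁ * μ - α₁ * μ * (s₁ : ℝ)) * (1 + α₂ * μ - α₂ * μ * (s₂ : ℝ))
      - μ ^ 2 * (s₁ : ℝ) * (s₂ : ℝ) := by
    nlinarith [K, hmt2, hβ₁pos, mul_pos hmt2 hβ₁pos,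
      mul_nonneg (mul_nonneg (mul_nonneg hα₁0 hμ.le) (by linarith : (0:ℝ) ≤ (s₁:ℝ))) hβ₂pos.le]
  -- invertibility
  have hker : ∀ x : ↥S → ℝ, G.mulVec x = 0 → x = 0 := by
    intro x hx0
    have hxv : ∀ k, ∑ l, G k l * x l = (fun _ : ↥S => (0:ℝ)) k := by
      intro k
      simpa [Matrix.mulVec, dotProduct] using congrFun hx0 k
    obtain ⟨B1, B2⟩ := KEY x (fun _ => 0) hxv
    simp only [abs_zero, Finset.sum_const_zero, zero_add] at B1 B2
    have hX1nn : (0:ℝ) ≤ ∑ k ∈ P₁, |x k| := Finset.sum_nonneg fun k _ => abs_nonneg _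
    have hX2nn : (0:ℝ) ≤ ∑ k ∈ P₂, |x k| := Finset.sum_nonneg fun k _ => abs_nonneg _
    have hX1 : ∑ k ∈ P₁, |x k| = 0 := by
      nlinarith [mul_le_mul_of_nonneg_left B1 ha₂pos.le,
        mul_le_mul_of_nonneg_left B2 hmt1.le, hDpos, hX1nn, hX2nn]
    have hX2 : ∑ k ∈ P₂, |x k| = 0 := by
      nlinarith [B2, hX1, hX2nn, ha₂pos]
    funext k
    have hk1 : ∀ k' ∈ P₁, |x k'| = 0 :=
      fun k' hk' => le_antisymm (by
        have := (Finset.sum_eq_zero_iff_of_nonneg (fun i _ => abs_nonneg (x i))).1 hX1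
        exact le_of_eq (this k' hk')) (abs_nonneg _)
    have hk2 : ∀ k' ∈ P₂, |x k'| = 0 :=
      fun k' hk' => le_antisymm (by
        have := (Finset.sum_eq_zero_iff_of_nonneg (fun i _ => abs_nonneg (x i))).1 hX2
        exact le_of_eq (this k' hk')) (abs_nonneg _)
    have : k ∈ P₁ ∪ P₂ := by rw [huniv]; exact Finset.mem_univ k
    rcases Finset.mem_union.1 this with hk | hk
    · simpa using abs_eq_zero.1 (hk1 k hk)
    · simpa using abs_eq_zero.1 (hk2 k hk)
  have hInj : Function.Injective G.mulVec := by
    intro a b hab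
    have h0 : G.mulVec (a - b) = 0 := by
      rw [Matrix.mulVec_sub, hab, sub_self]
    have := hker _ h0
    funext i
    have := congrFun this i
    simp only [Pi.sub_apply, Pi.zero_apply] at this
    linarith
  have hUnit : IsUnit G := Matrix.mulVec_injective_iff_isUnit.mp hInj
  refine ⟨hUnit, ?_⟩
  have hdet : IsUnit G.det := (Matrix.isUnit_iff_isUnit_det G).mp hUnit
  intro j hj
  set v : ↥S → ℝ := fun l => ∑ i, A i l.1 * A i j with hv
  set x : ↥S → ℝ := (G⁻¹).mulVec v with hx
  have hGxv : ∀ k, ∑ l, G k l * x l = v k := by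
    have hxv : G.mulVec x = v := by
      rw [hx, Matrix.mulVec_mulVec, Matrix.mul_nonsing_inv _ hdet, Matrix.one_mulVec]
    intro k
    simpa [Matrix.mulVec, dotProduct] using congrFun hxv k
  obtain ⟨B1, B2⟩ := KEY x v hGxv
  have hX1nn : (0:ℝ) ≤ ∑ k ∈ P₁, |x k| := Finset.sum_nonneg fun k _ => abs_nonneg _
  have hX2nn : (0:ℝ) ≤ ∑ k ∈ P₂, |x k| := Finset.sum_nonneg fun k _ => abs_nonneg _
  have hsum : ∑ k : ↥S, |x k| = (∑ k ∈ P₁, |x k|) + ∑ k ∈ P₂, |x k| := by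
    rw [← Finset.sum_union hdisj, huniv]
  have hne : ∀ k : ↥S, k.1 ≠ j := fun k h => hj (h ▸ k.2)
  -- case-independent consequences
  have h3 : ((1 + α₁ * μ - α₁ * μ * (s₁ : ℝ)) * (1 + α₂ * μ - α₂ * μ * (s₂ : ℝ))
        - μ ^ 2 * (s₁ : ℝ) * (s₂ : ℝ)) * (∑ k ∈ P₁, |x k|)
      ≤ (1 + α₂ * μ - α₂ * μ * (s₂ : ℝ)) * (∑ k ∈ P₁, |v k|)
        + μ * (s₁ : ℝ) * (∑ k ∈ P₂, |v k|) := by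
    nlinarith [mul_le_mul_of_nonneg_left B1 ha₂pos.le,
      mul_le_mul_of_nonneg_left B2 hmt1.le]
  have h4 : ((1 + α₁ * μ - α₁ * μ * (s₁ : ℝ)) * (1 + α₂ * μ - α₂ * μ * (s₂ : ℝ))
        - μ ^ 2 * (s₁ : ℝ) * (s₂ : ℝ)) * (∑ k ∈ P₂, |x k|)
      ≤ μ * (s₂ : ℝ) * (∑ k ∈ P₁, |v k|)
        + (1 + α₁ * μ - α₁ * μ * (s₁ : ℝ)) * (∑ k ∈ P₂, |v k|) := by
    nlinarith [mul_le_mul_of_nonneg_left B2 ha₁pos.le,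
      mul_le_mul_of_nonneg_left B1 hmt2.le]
  have C0 : (1 + α₂ * μ + (1 - α₂) * μ * (s₂ : ℝ)) * ((s₁ : ℝ) * (α₁ * μ))
      + (1 + α₁ * μ + (1 - α₁) * μ * (s₁ : ℝ)) * ((s₂ : ℝ) * μ)
      < (1 + α₁ * μ - α₁ * μ * (s₁ : ℝ)) * (1 + α₂ * μ - α₂ * μ * (s₂ : ℝ))
        - μ ^ 2 * (s₁ : ℝ) * (s₂ : ℝ) := by
    nlinarith [K]
  have hΔ : (1 + α₂ * μ + (1 - α₂) * μ * (s₂ : ℝ)) * ((s₁ : ℝ) * μ)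
      + (1 + α₁ * μ + (1 - α₁) * μ * (s₁ : ℝ)) * ((s₂ : ℝ) * (α₂ * μ))
      ≤ (1 + α₂ * μ + (1 - α₂) * μ * (s₂ : ℝ)) * ((s₁ : ℝ) * (α₁ * μ))
      + (1 + α₁ * μ + (1 - α₁) * μ * (s₁ : ℝ)) * ((s₂ : ℝ) * μ) := by
    have hu : (1 - α₁) * (s₁ : ℝ) ≤ (1 - α₂) * (s₂ : ℝ) :=
      mul_le_mul (by linarith) ht12 (by linarith) (by linarith)
    have hu2 : α₂ * ((1 - α₁) * (s₁ : ℝ)) ≤ α₁ * ((1 - α₂) * (s₂ : ℝ)) :=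
      mul_le_mul hα hu (by nlinarith) hα₁0
    nlinarith [mul_nonneg hμ.le (sub_nonneg.2 hu),
      mul_nonneg (mul_nonneg hμ.le hμ.le) (sub_nonneg.2 hu2)]
  have C1 : (1 + α₂ * μ + (1 - α₂) * μ * (s₂ : ℝ)) * ((s₁ : ℝ) * μ)
      + (1 + α₁ * μ + (1 - α₁) * μ * (s₁ : ℝ)) * ((s₂ : ℝ) * (α₂ * μ))
      < (1 + α₁ * μ - α₁ * μ * (s₁ : ℝ)) * (1 + α₂ * μ - α₂ * μ * (s₂ : ℝ))
        - μ ^ 2 * (s₁ : ℝ) * (s₂ : ℝ) := lt_of_le_of_lt hΔ C0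
  -- bound the right-hand sides depending on the block of j
  have hV2μ : ∑ k ∈ P₂, |v k| ≤ (s₂ : ℝ) * μ := by
    calc ∑ k ∈ P₂, |v k| ≤ ∑ k ∈ P₂, μ :=
          Finset.sum_le_sum fun k hk => hcoh k.1 j (hne k)
      _ = (s₂ : ℝ) * μ := by rw [Finset.sum_const, hcard2, nsmul_eq_mul]
  have hV1μ : ∑ k ∈ P₁, |v k| ≤ (s₁ : ℝ) * μ := by
    calc ∑ k ∈ P₁, |v k| ≤ ∑ k ∈ P₁, μ :=
          Finset.sum_le_sum fun k hk => hcoh k.1 j (hne k)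
      _ = (s₁ : ℝ) * μ := by rw [Finset.sum_const, hcard1, nsmul_eq_mul]
  rcases h2 (π j) with hj0 | hj1
  · -- j in block 1
    have hV1 : ∑ k ∈ P₁, |v k| ≤ (s₁ : ℝ) * (α₁ * μ) := by
      calc ∑ k ∈ P₁, |v k| ≤ ∑ k ∈ P₁, (α₁ * μ) :=
            Finset.sum_le_sum fun k hk => hblock1 k.1 j (hne k) ((hmem1 k).1 hk) hj0
        _ = (s₁ : ℝ) * (α₁ * μ) := by rw [Finset.sum_const, hcard1, nsmul_eq_mul]
    rw [hsum]
    have hfin : ((1 + α₁ * μ - α₁ * μ * (s₁ : ℝ)) * (1 + α₂ * μ - α₂ * μ * (s₂ : ℝ))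
          - μ ^ 2 * (s₁ : ℝ) * (s₂ : ℝ))
        * ((∑ k ∈ P₁, |x k|) + ∑ k ∈ P₂, |x k|)
        < ((1 + α₁ * μ - α₁ * μ * (s₁ : ℝ)) * (1 + α₂ * μ - α₂ * μ * (s₂ : ℝ))
          - μ ^ 2 * (s₁ : ℝ) * (s₂ : ℝ)) * 1 := by
      nlinarith [h3, h4, C0, mul_le_mul_of_nonneg_left hV1 hβ₂pos.le,
        mul_le_mul_of_nonneg_left hV2μ hβ₁pos.le]
    have := lt_of_mul_lt_mul_left hfin hDpos.le
    linarith
  · -- j in block 2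
    have hV2 : ∑ k ∈ P₂, |v k| ≤ (s₂ : ℝ) * (α₂ * μ) := by
      calc ∑ k ∈ P₂, |v k| ≤ ∑ k ∈ P₂, (α₂ * μ) :=
            Finset.sum_le_sum fun k hk => hblock2 k.1 j (hne k) ((hmem2 k).1 hk) hj1
        _ = (s₂ : ℝ) * (α₂ * μ) := by rw [Finset.sum_const, hcard2, nsmul_eq_mul]
    rw [hsum]
    have hfin : ((1 + α₁ * μ - α₁ * μ * (s₁ : ℝ)) * (1 + α₂ * μ - α₂ * μ * (s₂ : ℝ))
          - μ ^ 2 * (s₁ : ℝ) * (s₂ : ℝ))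
        * ((∑ k ∈ P₁, |x k|) + ∑ k ∈ P₂, |x k|)
        < ((1 + α₁ * μ - α₁ * μ * (s₁ : ℝ)) * (1 + α₂ * μ - α₂ * μ * (s₂ : ℝ))
          - μ ^ 2 * (s₁ : ℝ) * (s₂ : ℝ)) * 1 := by
      nlinarith [h3, h4, C1, mul_le_mul_of_nonneg_left hV1μ hβ₂pos.le,
        mul_le_mul_of_nonneg_left hV2 hβ₁pos.le]
    have := lt_of_mul_lt_mul_left hfin hDpos.le
    linarith
end

section
/- Let A = [A₁,…,A_N] ∈ ℝ^{m×n} be a union of N ≥ 2 orthonormal bases (unit-norm columns, pairwise orthogonal within each block), and suppose μ > 0 satisfies |⟨a_j, a_k⟩| ≤ μ for all distinct columns a_j, a_k. Let S be a support set with s_i = |S ∩ (block i)| ≥ 1 and s₁ ≤ s₂ ≤ ⋯ ≤ s_N. If Σ_{j=2}^{N} μ s_j/(1 + μ s_j) < 1/(2(1 + μ s₁)), then the Gram matrix A_Sᵀ A_S is invertible and ‖(A_Sᵀ A_S)⁻¹ A_Sᵀ a_j‖₁ < 1 for every column index j ∉ S. -/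
open Finset

lemma erc_core {m n N : ℕ}
    (A : Matrix (Fin m) (Fin n) ℝ) (π : Fin n → Fin N)
    (hunit : ∀ j, ∑ i, A i j * A i j = 1)
    (horth : ∀ j k, j ≠ k → π j = π k → ∑ i, A i j * A i k = 0)
    (μ : ℝ) (hμ : 0 < μ)
    (hcoh : ∀ j k, j ≠ k → |∑ i, A i j * A i k| ≤ μ)
    (S : Finset (Fin n))
    (s : Fin N → ℕ) (hs : ∀ i, s i = (S.filter fun j => π j = i).card)
    (hs1 : ∀ i, 1 ≤ s i)
    (hc : ∑ i : Fin N, μ * (s i : ℝ) / (1 + μ * (s i : ℝ)) ≤ 1)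
    (x b : ↥S → ℝ) (hxb : (gram A S).mulVec x = b)
    (β : Fin N → ℝ) (hβ : ∀ k : ↥S, |b k| ≤ β (π k.val)) :
    (1 - ∑ i : Fin N, μ * (s i : ℝ) / (1 + μ * (s i : ℝ))) * (∑ k, |x k|) ≤
      ∑ i : Fin N, (s i : ℝ) * β i / (1 + μ * (s i : ℝ)) := by
  classical
  set c : ℝ := ∑ i : Fin N, μ * (s i : ℝ) / (1 + μ * (s i : ℝ)) with hcdef
  have hd : ∀ i : Fin N, (0:ℝ) < 1 + μ * (s i : ℝ) := by
    intro i
    have : (0:ℝ) ≤ μ * (s i : ℝ) := by positivity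
    linarith
  -- fibers
  set T : Fin N → Finset ↥S := fun i => univ.filter (fun k : ↥S => π k.val = i) with hT
  have hTcard : ∀ i, (T i).card = s i := by
    intro i
    rw [hs]
    apply Finset.card_bij (fun (k : ↥S) _ => k.val)
    · intro k hk
      simp only [hT, mem_filter, mem_univ, true_and] at hk
      simp [hk, k.2]
    · intro k _ l _ h
      exact Subtype.ext h
    · intro j hj
      simp only [mem_filter] at hj
      exact ⟨⟨j, hj.1⟩, by simp [hT, hj.2], rfl⟩
  have hTne : ∀ i, (T i).Nonempty := by
    intro i
    rw [← Finset.card_pos, hTcard]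
    exact hs1 i
  set M : Fin N → ℝ := fun i => (T i).sup' (hTne i) (fun k => |x k|) with hM
  have hM0 : ∀ i, 0 ≤ M i := by
    intro i
    obtain ⟨k, hk⟩ := hTne i
    simp only [hM]
    exact le_trans (abs_nonneg (x k)) (Finset.le_sup' (fun k : ↥S => |x k|) hk)
  set P : Fin N → ℝ := fun i => ∑ k ∈ T i, |x k| with hP
  set Sx : ℝ := ∑ i, (s i : ℝ) * M i with hSx
  have hPfib : ∑ i, P i = ∑ k, |x k| := Finset.sum_fiberwise univ (fun k : ↥S => π k.val) _
  have hPle : ∀ i, P i ≤ (s i : ℝ) * M i := by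
    intro i
    calc P i ≤ (T i).card • M i :=
          Finset.sum_le_card_nsmul _ _ _ (fun k hk => Finset.le_sup' (fun k : ↥S => |x k|) hk)
      _ = (s i : ℝ) * M i := by rw [hTcard, nsmul_eq_mul]
  have hP0 : ∀ i, 0 ≤ P i := fun i => Finset.sum_nonneg fun k _ => abs_nonneg _
  have hPtotSx : ∑ k, |x k| ≤ Sx := by
    rw [← hPfib]; exact Finset.sum_le_sum fun i _ => hPle i
  -- pointwise bound
  have hpoint : ∀ k : ↥S, |x k| ≤ β (π k.val) + μ * ((∑ l, |x l|) - P (π k.val)) := by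
    intro k
    have hbk : b k = ∑ l, gram A S k l * x l := by
      rw [← hxb]; rfl
    have hsplit : ∑ l, gram A S k l * x l =
        (∑ l ∈ T (π k.val), gram A S k l * x l) +
          ∑ l ∈ univ.filter (fun l : ↥S => ¬ π l.val = π k.val), gram A S k l * x l := by
      rw [Finset.sum_filter_add_sum_filter_not]
    have hdiag : ∑ l ∈ T (π k.val), gram A S k l * x l = x k := by
      rw [Finset.sum_eq_single k]
      · have : gram A S k k = 1 := hunit k.val
        rw [this, one_mul]
      · intro l hl hlk
        have hne : (l : Fin n) ≠ (k : Fin n) := fun h => hlk (Subtype.ext h)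
        simp only [hT, mem_filter] at hl
        have : gram A S k l = 0 := by
          have := horth (l : Fin n) (k : Fin n) hne hl.2
          unfold gram
          simp only [Matrix.of_apply]
          rw [← this]
          exact Finset.sum_congr rfl fun i _ => mul_comm _ _
        rw [this, zero_mul]
      · intro hk
        exact absurd (by simp [hT]) hk
    have hx : x k = b k - ∑ l ∈ univ.filter (fun l : ↥S => ¬ π l.val = π k.val),
        gram A S k l * x l := by
      rw [hbk, hsplit, hdiag]; ring
    have hrest : |∑ l ∈ univ.filter (fun l : ↥S => ¬ π l.val = π k.val),
        gram A S k l * x l| ≤ μ * ((∑ l, |x l|) - P (π k.val)) := by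
      calc |∑ l ∈ univ.filter (fun l : ↥S => ¬ π l.val = π k.val), gram A S k l * x l|
          ≤ ∑ l ∈ univ.filter (fun l : ↥S => ¬ π l.val = π k.val), |gram A S k l * x l| :=
            Finset.abs_sum_le_sum_abs _ _
        _ ≤ ∑ l ∈ univ.filter (fun l : ↥S => ¬ π l.val = π k.val), μ * |x l| := by
            apply Finset.sum_le_sum
            intro l hl
            simp only [mem_filter, mem_univ, true_and] at hl
            rw [abs_mul]
            apply mul_le_mul_of_nonneg_right _ (abs_nonneg _)
            have hne : (k : Fin n) ≠ (l : Fin n) := by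
              intro h
              exact hl (by rw [← h])
            exact hcoh (k : Fin n) (l : Fin n) hne
        _ = μ * ∑ l ∈ univ.filter (fun l : ↥S => ¬ π l.val = π k.val), |x l| := by
            rw [Finset.mul_sum]
        _ = μ * ((∑ l, |x l|) - P (π k.val)) := by
            congr 1
            have := Finset.sum_filter_add_sum_filter_not univ
              (fun l : ↥S => π l.val = π k.val) (fun l => |x l|)
            simp only [hP, hT]
            linarith [this]
    calc |x k| = |b k - ∑ l ∈ univ.filter (fun l : ↥S => ¬ π l.val = π k.val),
            gram A S k l * x l| := by rw [← hx]
      _ ≤ |b k| + |∑ l ∈ univ.filter (fun l : ↥S => ¬ π l.val = π k.val),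
            gram A S k l * x l| := abs_sub _ _
      _ ≤ β (π k.val) + μ * ((∑ l, |x l|) - P (π k.val)) := add_le_add (hβ k) hrest
  -- block bound
  have hMble : ∀ i, M i * (1 + μ * (s i : ℝ)) ≤ β i + μ * Sx := by
    intro i
    have h1 : M i ≤ β i + μ * ((∑ l, |x l|) - P i) := by
      apply Finset.sup'_le
      intro k hk
      simp only [hT, mem_filter, mem_univ, true_and] at hk
      have := hpoint k
      rwa [hk] at this
    have h2 : (∑ l, |x l|) - P i ≤ Sx - (s i : ℝ) * M i := by
      rw [← hPfib, hSx]
      have : ∑ j, P j - P i = ∑ j ∈ univ.erase i, P j := by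
        rw [Finset.sum_erase_eq_sub (mem_univ i)]
      rw [this]
      have : Sx - (s i : ℝ) * M i = ∑ j ∈ univ.erase i, (s j : ℝ) * M j := by
        rw [Finset.sum_erase_eq_sub (mem_univ i)]
      rw [this]
      exact Finset.sum_le_sum fun j _ => hPle j
    have h3 : M i ≤ β i + μ * (Sx - (s i : ℝ) * M i) := by
      calc M i ≤ β i + μ * ((∑ l, |x l|) - P i) := h1
        _ ≤ β i + μ * (Sx - (s i : ℝ) * M i) := by
            apply add_le_add le_rfl
            exact mul_le_mul_of_nonneg_left h2 hμ.le
    nlinarith [h3]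
  have hSMle : ∀ i, (s i : ℝ) * M i ≤ (s i : ℝ) * (β i + μ * Sx) / (1 + μ * (s i : ℝ)) := by
    intro i
    rw [le_div_iff₀ (hd i)]
    have : (s i : ℝ) * (β i + μ * Sx) = (s i : ℝ) * ((β i + μ * Sx)) := rfl
    calc (s i : ℝ) * M i * (1 + μ * (s i : ℝ)) = (s i : ℝ) * (M i * (1 + μ * (s i : ℝ))) := by
          ring
      _ ≤ (s i : ℝ) * (β i + μ * Sx) := by
          apply mul_le_mul_of_nonneg_left (hMble i) (Nat.cast_nonneg _)
  have hSxle : Sx ≤ (∑ i, (s i : ℝ) * β i / (1 + μ * (s i : ℝ))) + c * Sx := by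
    calc Sx ≤ ∑ i, (s i : ℝ) * (β i + μ * Sx) / (1 + μ * (s i : ℝ)) :=
          Finset.sum_le_sum fun i _ => hSMle i
      _ = (∑ i, (s i : ℝ) * β i / (1 + μ * (s i : ℝ))) + c * Sx := by
          rw [hcdef, Finset.sum_mul, ← Finset.sum_add_distrib]
          apply Finset.sum_congr rfl
          intro i _
          field_simp
  have hSx0 : 0 ≤ Sx := Finset.sum_nonneg fun i _ => mul_nonneg (Nat.cast_nonneg _) (hM0 i)
  have hfinal : (1 - c) * Sx ≤ ∑ i, (s i : ℝ) * β i / (1 + μ * (s i : ℝ)) := by nlinarith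
  calc (1 - c) * (∑ k, |x k|) ≤ (1 - c) * Sx := by
        apply mul_le_mul_of_nonneg_left hPtotSx
        linarith
    _ ≤ _ := hfinal

/-- **Exact Recovery Condition for a union of `N` orthonormal bases (Tropp).**
Suppose `A = [A₁,…,A_N]` with `N ≥ 2` has unit-norm columns partitioned into blocks by
`π`, distinct columns within a block are orthogonal, and the overall coherence is bounded
by `μ > 0`.  Let `S` meet block `i` in `s i ≥ 1` columns with `s` nondecreasing
(`s₁ ≤ s₂ ≤ ⋯ ≤ s_N`).  If `∑_{j=2}^{N} μ s_j/(1 + μ s_j) < 1/(2 (1 + μ s₁))`, then the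
Gram matrix `A_Sᵀ A_S` is invertible and the Exact Recovery Condition
`‖(A_Sᵀ A_S)⁻¹ A_Sᵀ a_j‖₁ < 1` holds for every column index `j ∉ S`. -/
theorem orthobases_erc {m n N : ℕ} (hN : 2 ≤ N)
    (A : Matrix (Fin m) (Fin n) ℝ) (π : Fin n → Fin N)
    (hunit : ∀ j, ∑ i, A i j * A i j = 1)
    (horth : ∀ j k, j ≠ k → π j = π k → ∑ i, A i j * A i k = 0)
    (μ : ℝ) (hμ : 0 < μ)
    (hcoh : ∀ j k, j ≠ k → |∑ i, A i j * A i k| ≤ μ)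
    (S : Finset (Fin n))
    (s : Fin N → ℕ) (hs : ∀ i, s i = (S.filter fun j => π j = i).card)
    (hs1 : ∀ i, 1 ≤ s i)
    (hmono : ∀ i j : Fin N, i ≤ j → s i ≤ s j)
    (hcond : ∑ i ∈ Finset.univ.filter (fun i => i ≠ (⟨0, by omega⟩ : Fin N)),
        μ * (s i : ℝ) / (1 + μ * (s i : ℝ)) <
      1 / (2 * (1 + μ * (s (⟨0, by omega⟩ : Fin N) : ℝ)))) :
    IsUnit (gram A S) ∧
      ∀ j ∉ S, ∑ k : ↥S,
        |Matrix.mulVec (gram A S)⁻¹ (fun l : ↥S => ∑ i, A i (l : Fin n) * A i j) k| < 1 := by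
  classical
  set i0 : Fin N := ⟨0, by omega⟩ with hi0
  set f : Fin N → ℝ := fun i => μ * (s i : ℝ) / (1 + μ * (s i : ℝ)) with hf
  have hd : ∀ i : Fin N, (0:ℝ) < 1 + μ * (s i : ℝ) := by
    intro i
    have : (0:ℝ) ≤ μ * (s i : ℝ) := by positivity
    linarith
  have hf0 : ∀ i, 0 ≤ f i := by
    intro i
    apply div_nonneg _ (hd i).le
    positivity
  have hflt1 : ∀ i, f i < 1 := by
    intro i
    rw [hf]
    rw [div_lt_one (hd i)]
    linarith
  set c : ℝ := ∑ i : Fin N, f i with hc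
  -- split off i0
  have hsplit : c = f i0 + ∑ i ∈ Finset.univ.filter (fun i => i ≠ i0), f i := by
    rw [hc, Finset.filter_ne', Finset.sum_erase_eq_sub (Finset.mem_univ i0)]
    ring
  -- rewrite the RHS of hcond
  have hrhs : 1 / (2 * (1 + μ * (s i0 : ℝ))) = (1 - f i0) / 2 := by
    rw [hf]
    field_simp
    ring
  have h2c : 2 * c < 1 + f i0 := by
    rw [hsplit]
    rw [hrhs] at hcond
    linarith
  have hc1 : c < 1 := by
    have := hflt1 i0
    linarith
  -- f is monotone: f i0 ≤ f t for all t
  have hfmono : ∀ t : Fin N, f i0 ≤ f t := by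
    intro t
    have hst : s i0 ≤ s t := hmono i0 t (by simp [hi0, Fin.le_def])
    rw [hf, div_le_div_iff₀ (hd i0) (hd t)]
    have : (s i0 : ℝ) ≤ (s t : ℝ) := Nat.cast_le.2 hst
    nlinarith
  have hcle : c ≤ 1 := hc1.le
  -- invertibility
  have hdet : (gram A S).det ≠ 0 := by
    intro hdet0
    obtain ⟨v, hv0, hv⟩ := (Matrix.exists_mulVec_eq_zero_iff).2 hdet0
    have hkey := erc_core A π hunit horth μ hμ hcoh S s hs hs1 hcle v 0 hv
      (fun _ => 0) (fun k => by simp)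
    simp only [mul_zero, zero_mul, zero_div, mul_zero, Finset.sum_const_zero] at hkey
    have hsum0 : ∑ k, |v k| ≤ 0 := by
      by_contra h
      push_neg at h
      have h1c : 0 < 1 - c := by linarith
      nlinarith
    have : ∀ k, v k = 0 := by
      intro k
      have h1 : |v k| ≤ ∑ l, |v l| := Finset.single_le_sum (fun l _ => abs_nonneg (v l))
        (Finset.mem_univ k)
      have := abs_nonneg (v k)
      have : |v k| = 0 := le_antisymm (by linarith) (abs_nonneg _)
      exact abs_eq_zero.1 this
    exact hv0 (funext this)
  have hunitG : IsUnit (gram A S) := by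
    rw [Matrix.isUnit_iff_isUnit_det]
    exact isUnit_iff_ne_zero.2 hdet
  refine ⟨hunitG, ?_⟩
  intro j hj
  set b : ↥S → ℝ := fun l => ∑ i, A i (l : Fin n) * A i j with hb
  set x : ↥S → ℝ := Matrix.mulVec (gram A S)⁻¹ b with hx
  have hxb : (gram A S).mulVec x = b := by
    rw [hx, Matrix.mulVec_mulVec, Matrix.mul_nonsing_inv _ ((Matrix.isUnit_iff_isUnit_det _).1 hunitG), Matrix.one_mulVec]
  set t : Fin N := π j with ht
  set β : Fin N → ℝ := fun i => if i = t then 0 else μ with hβdef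
  have hβ : ∀ k : ↥S, |b k| ≤ β (π k.val) := by
    intro k
    have hkj : (k : Fin n) ≠ j := by
      intro h
      exact hj (h ▸ k.2)
    by_cases hkt : π k.val = t
    · have : b k = 0 := horth (k : Fin n) j hkj hkt
      simp [hβdef, hkt, this]
    · simp only [hβdef, if_neg hkt]
      exact hcoh (k : Fin n) j hkj
  have hkey := erc_core A π hunit horth μ hμ hcoh S s hs hs1 hcle x b hxb β hβ
  -- compute RHS
  have hRHS : ∑ i : Fin N, (s i : ℝ) * β i / (1 + μ * (s i : ℝ)) = c - f t := by
    have h1 : ∀ i : Fin N, (s i : ℝ) * β i / (1 + μ * (s i : ℝ)) =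
        f i - (if i = t then f i else 0) := by
      intro i
      by_cases h : i = t
      · simp [hβdef, h, hf]
      · simp only [hβdef, if_neg h, hf]
        rw [sub_zero]
        ring
    rw [Finset.sum_congr rfl (fun i _ => h1 i), Finset.sum_sub_distrib,
      Finset.sum_ite_eq' Finset.univ t f, if_pos (Finset.mem_univ t), hc]
  rw [hRHS] at hkey
  have hlt : c - f t < 1 - c := by
    have := hfmono t
    linarith
  have h1c : 0 < 1 - c := by linarith
  have habs : ∀ k : ↥S, |Matrix.mulVec (gram A S)⁻¹ (fun l : ↥S => ∑ i, A i (l : Fin n) * A i j) k| = |x k| := by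
    intro k
    rfl
  calc ∑ k : ↥S, |Matrix.mulVec (gram A S)⁻¹ (fun l : ↥S => ∑ i, A i (l : Fin n) * A i j) k|
      = ∑ k : ↥S, |x k| := Finset.sum_congr rfl (fun k _ => habs k)
    _ < 1 := by
        by_contra h
        push_neg at h
        nlinarith
end

section
/- Let A ∈ ℝ^{m×n}, let x ∈ ℝⁿ satisfy Ax = b with support S = supp(x), and suppose the Gram matrix A_Sᵀ A_S is invertible and the Exact Recovery Condition holds: ‖(A_Sᵀ A_S)⁻¹ A_Sᵀ a_j‖₁ < 1 for every column index j ∉ S. Then x is the unique minimizer of the ℓ¹ norm over solutions of the system: every y ∈ ℝⁿ with Ay = b and y ≠ x satisfies ‖y‖₁ > ‖x‖₁. -/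
/-- **The Exact Recovery Condition implies exact recovery by Basis Pursuit.**
If `x` solves `A x = b` with support `S`, the Gram matrix `A_Sᵀ A_S` is invertible, and
`‖(A_Sᵀ A_S)⁻¹ A_Sᵀ a_j‖₁ < 1` for every column index `j ∉ S`, then `x` is the unique
`ℓ¹`-minimizer: every `y ≠ x` with `A y = b` satisfies `‖y‖₁ > ‖x‖₁`. -/
theorem erc_implies_l1_uniqueness {m n : ℕ}
    (A : Matrix (Fin m) (Fin n) ℝ) (x : Fin n → ℝ) (b : Fin m → ℝ)
    (hx : A.mulVec x = b)
    (S : Finset (Fin n)) (hS : S = Finset.univ.filter fun j => x j ≠ 0)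
    (hinv : IsUnit (gram A S))
    (herc : ∀ j ∉ S, ∑ k : ↥S,
      |Matrix.mulVec (gram A S)⁻¹ (fun l : ↥S => ∑ i, A i (l : Fin n) * A i j) k| < 1) :
    ∀ y : Fin n → ℝ, A.mulVec y = b → y ≠ x → ∑ j, |x j| < ∑ j, |y j| := by
  classical
  intro y hy hne
  have hmem : ∀ j, j ∈ S ↔ x j ≠ 0 := by
    intro j; subst hS; simp
  have hdet : IsUnit (gram A S).det := (Matrix.isUnit_iff_isUnit_det _).mp hinv
  have hGinv : gram A S * (gram A S)⁻¹ = 1 := Matrix.mul_nonsing_inv _ hdet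
  have hGinv' : (gram A S)⁻¹ * gram A S = 1 := Matrix.nonsing_inv_mul _ hdet
  have hsym : Matrix.transpose (gram A S) = gram A S := by
    ext j k; simp [gram, Matrix.transpose_apply, mul_comm]
  have hsyminv : ∀ k l, (gram A S)⁻¹ k l = (gram A S)⁻¹ l k := by
    intro k l
    have h1 : Matrix.transpose ((gram A S)⁻¹) = (gram A S)⁻¹ := by
      rw [Matrix.transpose_nonsing_inv, hsym]
    have := congrFun (congrFun h1 l) k
    simpa [Matrix.transpose_apply] using this
  -- Ah = 0 where h = y - x
  have hAh : ∀ i, ∑ j, A i j * (y j - x j) = 0 := by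
    intro i
    have h1 : A.mulVec y i = b i := by rw [hy]
    have h2 : A.mulVec x i = b i := by rw [hx]
    simp only [Matrix.mulVec, dotProduct] at h1 h2
    calc ∑ j, A i j * (y j - x j) = (∑ j, A i j * y j) - ∑ j, A i j * x j := by
          rw [← Finset.sum_sub_distrib]; apply Finset.sum_congr rfl; intros; ring
      _ = 0 := by rw [h1, h2, sub_self]
  -- sign vector, dual vector w, correlations c
  set sg : ↥S → ℝ := fun k => if x (k : Fin n) < 0 then -1 else 1 with hsg
  set u : ↥S → ℝ := Matrix.mulVec (gram A S)⁻¹ sg with hu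
  set w : Fin m → ℝ := fun i => ∑ k : ↥S, A i (k : Fin n) * u k with hw
  set c : Fin n → ℝ := fun j => ∑ i, A i j * w i with hc
  have habs_sg : ∀ k : ↥S, |sg k| = 1 := by
    intro k; by_cases hxk : x (k : Fin n) < 0 <;> simp [hsg, hxk]
  -- rearrangement
  have crearr : ∀ j, c j = ∑ k : ↥S, (∑ i, A i (k : Fin n) * A i j) * u k := by
    intro j
    simp only [hc, hw, Finset.mul_sum]
    rw [Finset.sum_comm]
    apply Finset.sum_congr rfl; intro k _
    rw [Finset.sum_mul]
    apply Finset.sum_congr rfl; intro i _; ring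
  -- c agrees with the sign on S
  have hcS : ∀ k : ↥S, c (k : Fin n) = sg k := by
    intro k
    have : c (k : Fin n) = Matrix.mulVec (gram A S) u k := by
      rw [crearr]
      simp only [Matrix.mulVec, dotProduct, gram, Matrix.of_apply]
      apply Finset.sum_congr rfl; intro l _
      congr 1
      apply Finset.sum_congr rfl; intro i _; ring
    rw [this, hu, Matrix.mulVec_mulVec, hGinv, Matrix.one_mulVec]
  -- |c j| < 1 off S
  have hcoff : ∀ j ∉ S, |c j| < 1 := by
    intro j hj
    have step1 : ∀ k : ↥S, (∑ i, A i (k : Fin n) * A i j) * u k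
        = ∑ l : ↥S, sg l * ((gram A S)⁻¹ l k * (∑ i, A i (k : Fin n) * A i j)) := by
      intro k
      rw [hu]
      simp only [Matrix.mulVec, dotProduct]
      rw [Finset.mul_sum]
      apply Finset.sum_congr rfl; intro l _
      rw [hsyminv k l]; ring
    have hcj : c j = ∑ l : ↥S, sg l *
        Matrix.mulVec (gram A S)⁻¹ (fun l : ↥S => ∑ i, A i (l : Fin n) * A i j) l := by
      rw [crearr]
      calc ∑ k : ↥S, (∑ i, A i (k : Fin n) * A i j) * u k
          = ∑ k : ↥S, ∑ l : ↥S,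
              sg l * ((gram A S)⁻¹ l k * (∑ i, A i (k : Fin n) * A i j)) :=
            Finset.sum_congr rfl (fun k _ => step1 k)
        _ = ∑ l : ↥S, ∑ k : ↥S,
              sg l * ((gram A S)⁻¹ l k * (∑ i, A i (k : Fin n) * A i j)) := Finset.sum_comm
        _ = ∑ l : ↥S, sg l *
              Matrix.mulVec (gram A S)⁻¹ (fun l : ↥S => ∑ i, A i (l : Fin n) * A i j) l := by
            apply Finset.sum_congr rfl; intro l _
            rw [← Finset.mul_sum]
            rfl
    have hb : |c j| ≤ ∑ l : ↥S,
        |Matrix.mulVec (gram A S)⁻¹ (fun l : ↥S => ∑ i, A i (l : Fin n) * A i j) l| := by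
      rw [hcj]
      refine le_trans (Finset.abs_sum_le_sum_abs _ _) (le_of_eq ?_)
      apply Finset.sum_congr rfl; intro l _
      rw [abs_mul, habs_sg, one_mul]
    exact lt_of_le_of_lt hb (herc j hj)
  -- orthogonality
  have hortho : ∑ j, c j * (y j - x j) = 0 := by
    have : ∑ j, c j * (y j - x j) = ∑ i, w i * ∑ j, A i j * (y j - x j) := by
      simp only [hc, Finset.sum_mul, Finset.mul_sum]
      rw [Finset.sum_comm]
      apply Finset.sum_congr rfl; intro i _
      apply Finset.sum_congr rfl; intro j _; ring
    rw [this]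
    simp only [hAh, mul_zero, Finset.sum_const_zero]
  -- pointwise inequality
  have key : ∀ j, |x j| + c j * (y j - x j) ≤ |y j| := by
    intro j
    by_cases hj : j ∈ S
    · have hcs := hcS ⟨j, hj⟩
      have hsx : sg ⟨j, hj⟩ * x j = |x j| := by
        by_cases hxj : x j < 0
        · simp [hsg, hxj, abs_of_neg hxj]
        · have : 0 ≤ x j := le_of_not_gt hxj
          simp [hsg, hxj, abs_of_nonneg this]
      have : |x j| + c j * (y j - x j) = sg ⟨j, hj⟩ * y j := by
        rw [hcs, ← hsx]; ring
      rw [this]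
      calc sg ⟨j, hj⟩ * y j ≤ |sg ⟨j, hj⟩ * y j| := le_abs_self _
        _ = |y j| := by rw [abs_mul, habs_sg, one_mul]
    · have hxj : x j = 0 := by
        by_contra hxx; exact hj ((hmem j).mpr hxx)
      rw [hxj]
      have h1 : c j * (y j - 0) ≤ |c j| * |y j| := by
        rw [sub_zero]
        calc c j * y j ≤ |c j * y j| := le_abs_self _
          _ = |c j| * |y j| := abs_mul _ _
      have h2 : |c j| * |y j| ≤ 1 * |y j| :=
        mul_le_mul_of_nonneg_right (le_of_lt (hcoff j hj)) (abs_nonneg _)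
      simp only [abs_zero, zero_add]
      linarith
  -- there is j₀ ∉ S with y j₀ ≠ 0
  have hex : ∃ j₀, j₀ ∉ S ∧ y j₀ ≠ 0 := by
    by_contra hcon
    push_neg at hcon
    -- then y - x is supported on S, and invertibility of gram forces y = x
    apply hne
    set v : ↥S → ℝ := fun k => y (k : Fin n) - x (k : Fin n) with hv
    have hsum0 : ∀ i, ∑ k : ↥S, A i (k : Fin n) * v k = 0 := by
      intro i
      have : ∑ k : ↥S, A i (k : Fin n) * v k = ∑ j ∈ S, A i j * (y j - x j) := by
        rw [← Finset.sum_coe_sort S (fun j => A i j * (y j - x j))]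
      rw [this]
      have hext : ∑ j ∈ S, A i j * (y j - x j) = ∑ j, A i j * (y j - x j) := by
        apply Finset.sum_subset (Finset.subset_univ S)
        intro j _ hj
        have hxj : x j = 0 := by
          by_contra hxx; exact hj ((hmem j).mpr hxx)
        have hyj : y j = 0 := hcon j hj
        rw [hxj, hyj]; ring
      rw [hext, hAh i]
    have hGv : Matrix.mulVec (gram A S) v = 0 := by
      funext l
      simp only [Matrix.mulVec, dotProduct, gram, Matrix.of_apply, Pi.zero_apply]
      calc ∑ k : ↥S, (∑ i, A i (l : Fin n) * A i (k : Fin n)) * v k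
          = ∑ i, A i (l : Fin n) * ∑ k : ↥S, A i (k : Fin n) * v k := by
            simp only [Finset.mul_sum, Finset.sum_mul]
            rw [Finset.sum_comm]
            apply Finset.sum_congr rfl; intro k _
            apply Finset.sum_congr rfl; intro i _; ring
        _ = 0 := by simp only [hsum0, mul_zero, Finset.sum_const_zero]
    have hv0 : v = 0 := by
      have := congrArg (Matrix.mulVec (gram A S)⁻¹) hGv
      rwa [Matrix.mulVec_mulVec, hGinv', Matrix.one_mulVec, Matrix.mulVec_zero] at this
    funext j
    by_cases hj : j ∈ S
    · have := congrFun hv0 ⟨j, hj⟩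
      simp only [hv, Pi.zero_apply] at this
      linarith
    · have hxj : x j = 0 := by
        by_contra hxx; exact hj ((hmem j).mpr hxx)
      rw [hxj, hcon j hj]
  obtain ⟨j₀, hj₀S, hj₀⟩ := hex
  have hxj₀ : x j₀ = 0 := by
    by_contra hxx; exact hj₀S ((hmem j₀).mpr hxx)
  -- strict inequality at j₀
  have keystrict : |x j₀| + c j₀ * (y j₀ - x j₀) < |y j₀| := by
    rw [hxj₀, abs_zero, zero_add, sub_zero]
    calc c j₀ * y j₀ ≤ |c j₀| * |y j₀| := by
          rw [← abs_mul]; exact le_abs_self _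
      _ < 1 * |y j₀| := by
          apply mul_lt_mul_of_pos_right (hcoff j₀ hj₀S)
          exact abs_pos.mpr hj₀
      _ = |y j₀| := one_mul _
  have hsumlt : ∑ j, (|x j| + c j * (y j - x j)) < ∑ j, |y j| := by
    apply Finset.sum_lt_sum (fun j _ => key j) ⟨j₀, Finset.mem_univ _, keystrict⟩
  calc ∑ j, |x j| = ∑ j, (|x j| + c j * (y j - x j)) := by
        rw [Finset.sum_add_distrib, hortho, add_zero]
    _ < ∑ j, |y j| := hsumlt
end

section
/- Let A ∈ ℝ^{m×n} and suppose x ∈ ℝⁿ satisfies Ax = b and 2‖x‖₀ < ‖z‖₀ for every nonzero z ∈ ℝⁿ with Az = 0 (i.e. ‖x‖₀ < spark(A)/2). Then x is the unique sparsest solution: every y ∈ ℝⁿ with Ay = b and ‖y‖₀ ≤ ‖x‖₀ satisfies y = x. -/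
/-- **Spark-based uniqueness of the sparsest solution.**
If `x` solves `A x = b` and `2 ‖x‖₀ < ‖z‖₀` for every nonzero `z` in the kernel of `A`
(i.e. `‖x‖₀ < spark(A)/2`), then `x` is the unique sparsest solution: every `y` with
`A y = b` and `‖y‖₀ ≤ ‖x‖₀` equals `x`. -/
theorem spark_uniqueness {m n : ℕ}
    (A : Matrix (Fin m) (Fin n) ℝ) (x : Fin n → ℝ) (b : Fin m → ℝ)
    (hx : A.mulVec x = b)
    (hspark : ∀ z : Fin n → ℝ, z ≠ 0 → A.mulVec z = 0 → 2 * l0 x < l0 z) :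
    ∀ y : Fin n → ℝ, A.mulVec y = b → l0 y ≤ l0 x → y = x := by
  intro y hy hle
  by_contra hne
  have hz : y - x ≠ 0 := sub_ne_zero.mpr hne
  have hAz : A.mulVec (y - x) = 0 := by
    rw [Matrix.mulVec_sub, hx, hy, sub_self]
  have hkey := hspark (y - x) hz hAz
  have hsub : l0 (y - x) ≤ l0 y + l0 x := by
    have : (Finset.univ.filter fun j => (y - x) j ≠ 0) ⊆
        (Finset.univ.filter fun j => y j ≠ 0) ∪ (Finset.univ.filter fun j => x j ≠ 0) := by
      intro j hj
      simp only [Finset.mem_filter, Finset.mem_union, Finset.mem_univ, true_and] at *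
      by_contra h
      push_neg at h
      exact hj (by simp [Pi.sub_apply, h.1, h.2])
    calc l0 (y - x) ≤ ((Finset.univ.filter fun j => y j ≠ 0) ∪
          (Finset.univ.filter fun j => x j ≠ 0)).card := Finset.card_le_card this
      _ ≤ _ := Finset.card_union_le _ _
  omega
end
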